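/- arXiv:1901.10651 — 10 statements merged into one kernel-verified Lean document; each statement's English description precedes it below -/
import Mathlib

section
/- Let k ≥ 1, let μ be a Borel probability measure on ℝ^k having an orthogonal cone structure with parameters (σ, δ, r), and let X_1, X_2, … be i.i.d. random variables with law μ defined on some probability space. Fix ε > 0 and let μ_n := (1/n)·Σ_{i=1}^n δ_{X_i} denote the empirical measures. Then almost surely there exists K ∈ ℕ such that for every n ≥ K the empirical measure μ_n has an orthogonal cone structure with parameters (σ, δ + ε, r). -/
open MeasureTheory Real Filter
open scoped RealInnerProductSpace ENNReal

noncomputable section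

/-- The cone `C(e, σ, r) = { z : z ⬝ e > cos σ · ‖z‖, ‖z‖ > r }`. -/
def coneSet {k : ℕ} (e : EuclideanSpace ℝ (Fin k)) (σ r : ℝ) :
    Set (EuclideanSpace ℝ (Fin k)) :=
  {z | Real.cos σ * ‖z‖ < (inner ℝ z e : ℝ) ∧ r < ‖z‖}

/-- A measure on `ℝ^k` has an orthogonal cone structure with parameters `(σ, δ, r)`. -/
def HasOrthConeStructure {k : ℕ} (μ : Measure (EuclideanSpace ℝ (Fin k)))
    (σ δ r : ℝ) : Prop :=
  ∃ e : OrthonormalBasis (Fin k) ℝ (EuclideanSpace ℝ (Fin k)),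
    ENNReal.ofReal (1 - δ) ≤ μ (⋃ j, coneSet (e j) σ r)

/-- almost surely, the empirical measures of i.i.d. samples from a measure
with an orthogonal cone structure `(σ, δ, r)` eventually have an orthogonal cone structure
with parameters `(σ, δ + ε, r)`. -/
theorem statement1 {k : ℕ} (hk : 1 ≤ k)
    {Ω : Type*} [MeasurableSpace Ω] (P : Measure Ω) [IsProbabilityMeasure P]
    (μ : Measure (EuclideanSpace ℝ (Fin k))) [IsProbabilityMeasure μ]
    (σ δ r : ℝ) (hσ : σ ∈ Set.Ioo 0 (π / 4)) (hδ : δ ∈ Set.Ico (0 : ℝ) 1) (hr : 0 < r)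
    (hμ : HasOrthConeStructure μ σ δ r)
    (X : ℕ → Ω → EuclideanSpace ℝ (Fin k))
    (hXmeas : ∀ i, Measurable (X i))
    (hlaw : ∀ i, Measure.map (X i) P = μ)
    (hindep : ProbabilityTheory.iIndepFun X P)
    (ε : ℝ) (hε : 0 < ε) :
    ∀ᵐ ω ∂P, ∃ K : ℕ, ∀ n ≥ K,
      HasOrthConeStructure
        ((n : ℝ≥0∞)⁻¹ • ∑ i ∈ Finset.range n, Measure.dirac (X i ω)) σ (δ + ε) r := by
  obtain ⟨e, he⟩ := hμ
  set U : Set (EuclideanSpace ℝ (Fin k)) := ⋃ j, coneSet (e j) σ r with hU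
  have hUopen : IsOpen U := by
    refine isOpen_iUnion fun j => ?_
    have : coneSet (e j) σ r
        = {z | Real.cos σ * ‖z‖ < (inner ℝ z (e j) : ℝ)} ∩ {z | r < ‖z‖} := rfl
    rw [this]
    exact (isOpen_lt (continuous_const.mul continuous_norm)
      (continuous_id.inner continuous_const)).inter
      (isOpen_lt continuous_const continuous_norm)
  have hUmeas : MeasurableSet U := hUopen.measurableSet
  set f : EuclideanSpace ℝ (Fin k) → ℝ := U.indicator (fun _ => (1 : ℝ)) with hf
  have hfmeas : Measurable f := measurable_const.indicator hUmeas
  have hfnonneg : ∀ x, 0 ≤ f x := fun x => Set.indicator_nonneg (fun _ _ => zero_le_one) x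
  set Y : ℕ → Ω → ℝ := fun i ω => f (X i ω) with hY
  have hYeq : ∀ i, Y i = Set.indicator (X i ⁻¹' U) (fun _ => (1 : ℝ)) := by
    intro i
    funext ω
    by_cases h : X i ω ∈ U <;> simp [hY, hf, Set.indicator_apply, h]
  have hint : Integrable (Y 0) P := by
    rw [hYeq 0]
    exact (integrable_const (1 : ℝ)).indicator (hXmeas 0 hUmeas)
  have hindepY : Pairwise (Function.onFun (ProbabilityTheory.IndepFun · · P) Y) := fun i j hij =>
    (hindep.indepFun hij).comp hfmeas hfmeas
  have hident : ∀ i, ProbabilityTheory.IdentDistrib (Y i) (Y 0) P P := by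
    intro i
    have hX : ProbabilityTheory.IdentDistrib (X i) (X 0) P P :=
      ⟨(hXmeas i).aemeasurable, (hXmeas 0).aemeasurable, by rw [hlaw i, hlaw 0]⟩
    exact hX.comp hfmeas
  have hexp : (∫ ω, Y 0 ω ∂P) = (μ U).toReal := by
    have : (∫ ω, Y 0 ω ∂P) = ∫ x, f x ∂μ := by
      rw [← hlaw 0, integral_map (hXmeas 0).aemeasurable hfmeas.aestronglyMeasurable]
    rw [this, hf, integral_indicator_const (1 : ℝ) hUmeas, smul_eq_mul, mul_one, measureReal_def]
  have hlow : 1 - δ ≤ (μ U).toReal := by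
    have h1 : ENNReal.ofReal (1 - δ) ≤ μ U := he
    have h2 : μ U ≠ ⊤ := measure_ne_top μ U
    calc 1 - δ = (ENNReal.ofReal (1 - δ)).toReal :=
          (ENNReal.toReal_ofReal (by linarith [hδ.2])).symm
      _ ≤ (μ U).toReal := ENNReal.toReal_mono h2 h1
  have hsl := ProbabilityTheory.strong_law_ae_real Y hint hindepY hident
  filter_upwards [hsl] with ω hω
  have hev : ∀ᶠ n : ℕ in atTop, (μ U).toReal - ε < (∑ i ∈ Finset.range n, Y i ω) / n :=
    (tendsto_order.1 hω).1 _ (by rw [hexp]; linarith)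
  obtain ⟨K, hK⟩ := hev.exists_forall_of_atTop
  refine ⟨max K 1, fun n hn => ⟨e, ?_⟩⟩
  have hn1 : 1 ≤ n := le_trans (le_max_right K 1) hn
  have hnK : K ≤ n := le_trans (le_max_left K 1) hn
  have hnpos : (0 : ℝ) < n := by exact_mod_cast hn1
  -- compute the empirical measure of U
  have hcomp : ((n : ℝ≥0∞)⁻¹ • ∑ i ∈ Finset.range n, Measure.dirac (X i ω)) U
      = ENNReal.ofReal ((∑ i ∈ Finset.range n, Y i ω) / n) := by
    rw [Measure.smul_apply, Measure.finset_sum_apply]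
    have h1 : ∀ i ∈ Finset.range n, Measure.dirac (X i ω) U = ENNReal.ofReal (Y i ω) := by
      intro i _
      rw [Measure.dirac_apply' _ hUmeas]
      by_cases h : X i ω ∈ U <;> simp [hY, hf, Set.indicator_apply, h]
    rw [Finset.sum_congr rfl h1, ← ENNReal.ofReal_sum_of_nonneg
      (fun i _ => hfnonneg (X i ω))]
    have h2 : ((n : ℝ≥0∞))⁻¹ = ENNReal.ofReal ((n : ℝ))⁻¹ := by
      rw [ENNReal.ofReal_inv_of_pos hnpos, ENNReal.ofReal_natCast]
    rw [smul_eq_mul, h2, ← ENNReal.ofReal_mul (by positivity)]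
    congr 1
    rw [div_eq_inv_mul]
  rw [← hU, hcomp]
  apply ENNReal.ofReal_le_ofReal
  have := hK n hnK
  linarith
end
end

section
/- Let k ≥ 1 and let μ_1, μ_2 be Borel probability measures on ℝ^k with finite second moments. Suppose μ_1 has an orthogonal cone structure with parameters (σ, δ, r) where σ < π/4. Let s, t > 0 be such that σ + s < π/4, and suppose there exists a Borel probability measure π on ℝ^k × ℝ^k whose first and second marginals are μ_1 and μ_2 respectively and such that ∫ |x − y|² dπ(x,y) ≤ (r t sin(s)/√k)² (i.e. the 2-Wasserstein distance W_2(μ_1, μ_2) is at most r t sin(s)/√k). Then μ_2 has an orthogonal cone structure with parameters (σ + s, δ + t², r(1 − sin(s))). -/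
open MeasureTheory Real
open scoped ENNReal

noncomputable section

private lemma aux_neg_le (w d : ℝ) (hd : 0 ≤ d) (h : w ^ 2 ≤ d ^ 2) : -d ≤ w := by
  nlinarith

private lemma aux_pos_of_mul (a b : ℝ) (ha : 0 < a) (h : 0 < a * b) : 0 < b := by
  by_contra hb
  push_neg at hb
  nlinarith

set_option maxHeartbeats 800000 in
lemma cone_stable {k : ℕ} (e x y : EuclideanSpace ℝ (Fin k)) (he : ‖e‖ = 1)
    (σ s r : ℝ) (hσ : 0 < σ) (hs : 0 < s) (hangle : σ + s < π / 4) (hr : 0 < r)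
    (hx : x ∈ coneSet e σ r) (hd : ‖x - y‖ ≤ r * Real.sin s) :
    y ∈ coneSet e (σ + s) (r * (1 - Real.sin s)) := by
  obtain ⟨hx1, hx2⟩ := hx
  set Px : ℝ := inner ℝ x e with hPx
  set Py : ℝ := inner ℝ y e with hPy
  set Qx : ℝ := ‖x - Px • e‖ with hQx
  set Qy : ℝ := ‖y - Py • e‖ with hQy
  set d : ℝ := ‖x - y‖ with hdd
  have hee : (inner ℝ e e : ℝ) = 1 := by
    rw [real_inner_self_eq_norm_sq, he]; norm_num
  have hxe : (inner ℝ (x - Px • e) e : ℝ) = 0 := by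
    rw [inner_sub_left, real_inner_smul_left, hee]; ring
  have hye : (inner ℝ (y - Py • e) e : ℝ) = 0 := by
    rw [inner_sub_left, real_inner_smul_left, hee]; ring
  have pyth : ∀ z : EuclideanSpace ℝ (Fin k), ∀ P : ℝ, (inner ℝ (z - P • e) e : ℝ) = 0 →
      ‖z‖ ^ 2 = P ^ 2 + ‖z - P • e‖ ^ 2 := by
    intro z P hperp
    have h1 : (inner ℝ (P • e) (z - P • e) : ℝ) = 0 := by
      rw [real_inner_smul_left, real_inner_comm, hperp]; ring
    have hzz : P • e + (z - P • e) = z := by abel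
    have h2 := norm_add_sq_real (P • e) (z - P • e)
    rw [hzz, h1, norm_smul, he, mul_one, Real.norm_eq_abs, sq_abs] at h2
    linarith
  have pythx : ‖x‖ ^ 2 = Px ^ 2 + Qx ^ 2 := pyth x Px hxe
  have pythy : ‖y‖ ^ 2 = Py ^ 2 + Qy ^ 2 := pyth y Py hye
  have hdecomp : d ^ 2 = (Px - Py) ^ 2 + ‖(x - Px • e) - (y - Py • e)‖ ^ 2 := by
    have heq : (x - y) - (Px - Py) • e = (x - Px • e) - (y - Py • e) := by
      rw [sub_smul]; abel
    have h1 : (inner ℝ ((x - y) - (Px - Py) • e) e : ℝ) = 0 := by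
      rw [heq, inner_sub_left, hxe, hye]; ring
    have h2 := pyth (x - y) (Px - Py) h1
    rwa [heq] at h2
  have hQdiff : |Qy - Qx| ≤ ‖(x - Px • e) - (y - Py • e)‖ := by
    rw [abs_sub_le_iff]
    constructor
    · have h0 := norm_sub_norm_le (y - Py • e) (x - Px • e)
      rwa [norm_sub_rev (y - Py • e) (x - Px • e)] at h0
    · exact norm_sub_norm_le (x - Px • e) (y - Py • e)
  have hπ := Real.pi_pos
  have hsin_s : 0 < Real.sin s := Real.sin_pos_of_pos_of_lt_pi hs (by nlinarith)
  have hσs : 0 < σ + s := by linarith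
  have hcos : 0 < Real.cos (σ + s) := Real.cos_pos_of_mem_Ioo ⟨by linarith, by linarith⟩
  have hsin : 0 < Real.sin (σ + s) := Real.sin_pos_of_pos_of_lt_pi hσs (by nlinarith)
  have hcosσ : 0 < Real.cos σ := Real.cos_pos_of_mem_Ioo ⟨by linarith, by linarith⟩
  have hsinσ : 0 < Real.sin σ := Real.sin_pos_of_pos_of_lt_pi hσ (by nlinarith)
  have hxnorm : r < ‖x‖ := hx2
  have hd0 : 0 ≤ d := norm_nonneg _
  have hQx0 : 0 ≤ Qx := norm_nonneg _
  have hQy0 : 0 ≤ Qy := norm_nonneg _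
  have hx0 : 0 < ‖x‖ := lt_trans hr hxnorm
  have hPx0 : 0 < Px := lt_of_le_of_lt (mul_nonneg hcosσ.le (norm_nonneg x)) hx1
  have hsqσ : Real.sin σ ^ 2 + Real.cos σ ^ 2 = 1 := Real.sin_sq_add_cos_sq σ
  have hsq : Real.sin (σ + s) ^ 2 + Real.cos (σ + s) ^ 2 = 1 := Real.sin_sq_add_cos_sq _
  -- Qx < sin σ * ‖x‖
  have hpow : (Real.cos σ * ‖x‖) ^ 2 < Px ^ 2 :=
    pow_lt_pow_left₀ hx1 (mul_nonneg hcosσ.le (norm_nonneg x)) (by norm_num)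
  have e1 : (Real.sin σ * ‖x‖) ^ 2 = ‖x‖ ^ 2 - (Real.cos σ * ‖x‖) ^ 2 := by
    linear_combination (‖x‖ ^ 2) * hsqσ
  have hQxsq : Qx ^ 2 < (Real.sin σ * ‖x‖) ^ 2 := by linarith
  have hQxlt : Qx < Real.sin σ * ‖x‖ :=
    lt_of_pow_lt_pow_left₀ 2 (mul_nonneg hsinσ.le (norm_nonneg x)) hQxsq
  -- L_x := sin(σ+s) Px - cos(σ+s) Qx > sin s * ‖x‖
  have key : Real.sin (σ + s) * Real.cos σ - Real.cos (σ + s) * Real.sin σ = Real.sin s := by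
    rw [← Real.sin_sub]; ring_nf
  have e2 : Real.sin s * ‖x‖ =
      Real.sin (σ + s) * (Real.cos σ * ‖x‖) - Real.cos (σ + s) * (Real.sin σ * ‖x‖) := by
    linear_combination (-‖x‖) * key
  have hm1 : Real.sin (σ + s) * (Real.cos σ * ‖x‖) < Real.sin (σ + s) * Px :=
    mul_lt_mul_of_pos_left hx1 hsin
  have hm2 : Real.cos (σ + s) * Qx < Real.cos (σ + s) * (Real.sin σ * ‖x‖) :=
    mul_lt_mul_of_pos_left hQxlt hcos
  have hLx : Real.sin s * ‖x‖ < Real.sin (σ + s) * Px - Real.cos (σ + s) * Qx := by linarith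
  have hdlt : d < Real.sin s * ‖x‖ := by
    have h1 : r * Real.sin s < ‖x‖ * Real.sin s := mul_lt_mul_of_pos_right hxnorm hsin_s
    have h2 : ‖x‖ * Real.sin s = Real.sin s * ‖x‖ := mul_comm _ _
    linarith
  -- L_y > 0
  have hLy : 0 < Real.sin (σ + s) * Py - Real.cos (σ + s) * Qy := by
    set u : ℝ := ‖(x - Px • e) - (y - Py • e)‖ with hu
    have hu0 : 0 ≤ u := norm_nonneg _
    have habs : (Qy - Qx) ^ 2 ≤ u ^ 2 := by
      calc (Qy - Qx) ^ 2 = |Qy - Qx| ^ 2 := (sq_abs _).symm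
        _ ≤ u ^ 2 := pow_le_pow_left₀ (abs_nonneg _) hQdiff 2
    have hS : (Py - Px) ^ 2 + (Qy - Qx) ^ 2 ≤ d ^ 2 := by
      have : (Py - Px) ^ 2 = (Px - Py) ^ 2 := by ring
      linarith
    set w : ℝ := Real.sin (σ + s) * (Py - Px) - Real.cos (σ + s) * (Qy - Qx) with hw
    have hid : w ^ 2 = (Real.sin (σ + s) ^ 2 + Real.cos (σ + s) ^ 2) *
        ((Py - Px) ^ 2 + (Qy - Qx) ^ 2)
        - (Real.sin (σ + s) * (Qy - Qx) + Real.cos (σ + s) * (Py - Px)) ^ 2 := by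
      rw [hw]; ring
    rw [hsq, one_mul] at hid
    have hw2 : w ^ 2 ≤ d ^ 2 := by
      have := sq_nonneg (Real.sin (σ + s) * (Qy - Qx) + Real.cos (σ + s) * (Py - Px))
      linarith
    have hwd : -d ≤ w := aux_neg_le w d hd0 hw2
    have hexp : Real.sin (σ + s) * Py - Real.cos (σ + s) * Qy =
        (Real.sin (σ + s) * Px - Real.cos (σ + s) * Qx) + w := by
      rw [hw]; ring
    rw [hexp]
    linarith
  have hPy0 : 0 < Py := by
    have h6 : 0 < Real.sin (σ + s) * Py := by
      have := mul_nonneg hcos.le hQy0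
      linarith
    exact aux_pos_of_mul _ _ hsin h6
  refine ⟨?_, ?_⟩
  · show Real.cos (σ + s) * ‖y‖ < Py
    have h1' : Real.cos (σ + s) * Qy < Real.sin (σ + s) * Py := by linarith
    have hp2 : (Real.cos (σ + s) * Qy) ^ 2 < (Real.sin (σ + s) * Py) ^ 2 :=
      pow_lt_pow_left₀ h1' (mul_nonneg hcos.le hQy0) (by norm_num)
    have e3 : (Real.cos (σ + s) * ‖y‖) ^ 2 - Py ^ 2 =
        (Real.cos (σ + s) * Qy) ^ 2 - (Real.sin (σ + s) * Py) ^ 2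
        + (Real.sin (σ + s) ^ 2 + Real.cos (σ + s) ^ 2 - 1) * Py ^ 2
        + Real.cos (σ + s) ^ 2 * (‖y‖ ^ 2 - Py ^ 2 - Qy ^ 2) := by ring
    have h7 : (Real.cos (σ + s) * ‖y‖) ^ 2 < Py ^ 2 := by
      have hz : ‖y‖ ^ 2 - Py ^ 2 - Qy ^ 2 = 0 := by linarith
      rw [hz, hsq] at e3
      simp at e3
      linarith
    exact lt_of_pow_lt_pow_left₀ 2 hPy0.le h7
  · show r * (1 - Real.sin s) < ‖y‖
    have h1 : ‖x‖ - ‖y‖ ≤ d := norm_sub_norm_le x y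
    have h2 : r * (1 - Real.sin s) = r - r * Real.sin s := by ring
    linarith

lemma isOpen_coneSet {k : ℕ} (e : EuclideanSpace ℝ (Fin k)) (σ r : ℝ) :
    IsOpen (coneSet e σ r) := by
  have h1 : IsOpen {z : EuclideanSpace ℝ (Fin k) | Real.cos σ * ‖z‖ < (inner ℝ z e : ℝ)} :=
    isOpen_lt (continuous_const.mul continuous_norm) (continuous_id.inner continuous_const)
  have h2 : IsOpen {z : EuclideanSpace ℝ (Fin k) | r < ‖z‖} :=
    isOpen_lt continuous_const continuous_norm
  exact h1.inter h2



/-- stability of orthogonal cone structures under Wasserstein perturbations. -/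
theorem statement2 {k : ℕ} (hk : 1 ≤ k)
    (μ₁ μ₂ : Measure (EuclideanSpace ℝ (Fin k)))
    [IsProbabilityMeasure μ₁] [IsProbabilityMeasure μ₂]
    (hm₁ : ∫⁻ x, ENNReal.ofReal (‖x‖ ^ 2) ∂μ₁ < ⊤)
    (hm₂ : ∫⁻ x, ENNReal.ofReal (‖x‖ ^ 2) ∂μ₂ < ⊤)
    (σ δ r s t : ℝ) (hσ : σ ∈ Set.Ioo 0 (π / 4)) (hδ : δ ∈ Set.Ico (0 : ℝ) 1) (hr : 0 < r)
    (hs : 0 < s) (ht : 0 < t) (hangle : σ + s < π / 4)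
    (hμ₁ : HasOrthConeStructure μ₁ σ δ r)
    (plan : Measure (EuclideanSpace ℝ (Fin k) × EuclideanSpace ℝ (Fin k)))
    [IsProbabilityMeasure plan]
    (hfst : plan.fst = μ₁) (hsnd : plan.snd = μ₂)
    (hcost : ∫⁻ p, ENNReal.ofReal (‖p.1 - p.2‖ ^ 2) ∂plan ≤
      ENNReal.ofReal ((r * t * Real.sin s / Real.sqrt (k : ℝ)) ^ 2)) :
    HasOrthConeStructure μ₂ (σ + s) (δ + t ^ 2) (r * (1 - Real.sin s)) := by
  obtain ⟨e, hA⟩ := hμ₁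
  refine ⟨e, ?_⟩
  set E := EuclideanSpace ℝ (Fin k)
  set A : Set E := ⋃ j, coneSet (e j) σ r with hAdef
  set B : Set E := ⋃ j, coneSet (e j) (σ + s) (r * (1 - Real.sin s)) with hBdef
  have hAmeas : MeasurableSet A := (isOpen_iUnion fun j => isOpen_coneSet _ _ _).measurableSet
  have hBmeas : MeasurableSet B := (isOpen_iUnion fun j => isOpen_coneSet _ _ _).measurableSet
  have hπ := Real.pi_pos
  have hsin_s : 0 < Real.sin s :=
    Real.sin_pos_of_pos_of_lt_pi hs (by nlinarith [hσ.1])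
  have hrs : 0 < r * Real.sin s := mul_pos hr hsin_s
  set G : Set (E × E) := {p | r * Real.sin s < ‖p.1 - p.2‖} with hGdef
  have hGmeas : MeasurableSet G :=
    (isOpen_lt continuous_const ((continuous_fst.sub continuous_snd).norm)).measurableSet
  -- Chebyshev
  have hfmeas : AEMeasurable (fun p : E × E => ENNReal.ofReal (‖p.1 - p.2‖ ^ 2)) plan :=
    (ENNReal.continuous_ofReal.comp
      (((continuous_fst.sub continuous_snd).norm).pow 2)).aemeasurable
  have hcheb := mul_meas_ge_le_lintegral₀ hfmeas (ENNReal.ofReal ((r * Real.sin s) ^ 2))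
  have hGsub : G ⊆ {p : E × E | ENNReal.ofReal ((r * Real.sin s) ^ 2) ≤
      ENNReal.ofReal (‖p.1 - p.2‖ ^ 2)} := by
    intro p hp
    exact ENNReal.ofReal_le_ofReal (pow_le_pow_left₀ hrs.le (le_of_lt hp) 2)
  have hk0 : (0 : ℝ) < (k : ℝ) := by exact_mod_cast hk
  have hcost' : ENNReal.ofReal ((r * t * Real.sin s / Real.sqrt (k : ℝ)) ^ 2) =
      ENNReal.ofReal ((r * Real.sin s) ^ 2) * ENNReal.ofReal (t ^ 2 / (k : ℝ)) := by
    rw [← ENNReal.ofReal_mul (by positivity)]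
    congr 1
    rw [div_pow, Real.sq_sqrt hk0.le]
    ring
  have hGle : plan G ≤ ENNReal.ofReal (t ^ 2) := by
    have h1 : ENNReal.ofReal ((r * Real.sin s) ^ 2) * plan G ≤
        ENNReal.ofReal ((r * Real.sin s) ^ 2) * ENNReal.ofReal (t ^ 2 / (k : ℝ)) := by
      calc ENNReal.ofReal ((r * Real.sin s) ^ 2) * plan G
          ≤ ENNReal.ofReal ((r * Real.sin s) ^ 2) *
            plan {p : E × E | ENNReal.ofReal ((r * Real.sin s) ^ 2) ≤
              ENNReal.ofReal (‖p.1 - p.2‖ ^ 2)} :=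
            mul_le_mul_right (measure_mono hGsub) _
        _ ≤ ∫⁻ p, ENNReal.ofReal (‖p.1 - p.2‖ ^ 2) ∂plan := hcheb
        _ ≤ _ := by rw [← hcost']; exact hcost
    have h2 : plan G ≤ ENNReal.ofReal (t ^ 2 / (k : ℝ)) := by
      have hne : ENNReal.ofReal ((r * Real.sin s) ^ 2) ≠ 0 := by
        rw [Ne, ENNReal.ofReal_eq_zero, not_le]
        exact pow_pos hrs 2
      exact (ENNReal.mul_le_mul_iff_right hne ENNReal.ofReal_ne_top).mp h1
    refine le_trans h2 (ENNReal.ofReal_le_ofReal ?_)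
    exact div_le_self (sq_nonneg t) (by exact_mod_cast hk)
  -- inclusion
  have hincl : Prod.fst ⁻¹' A ⊆ (Prod.snd ⁻¹' B) ∪ G := by
    intro p hp
    by_cases hpG : p ∈ G
    · exact Or.inr hpG
    · left
      simp only [hGdef, Set.mem_setOf_eq, not_lt] at hpG
      obtain ⟨_, ⟨j, rfl⟩, hj⟩ := hp
      exact Set.mem_iUnion.mpr ⟨j, cone_stable (e j) p.1 p.2 (e.orthonormal.1 j)
        σ s r hσ.1 hs hangle hr hj hpG⟩
  have hμ₁A : ENNReal.ofReal (1 - δ) ≤ plan (Prod.fst ⁻¹' A) := by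
    rw [← Measure.fst_apply hAmeas, hfst]
    exact hA
  have hchain : ENNReal.ofReal (1 - δ) ≤ plan (Prod.snd ⁻¹' B) + ENNReal.ofReal (t ^ 2) :=
    le_trans hμ₁A (le_trans (measure_mono hincl)
      (le_trans (measure_union_le _ _) (add_le_add_right hGle _)))
  have hμ₂B : μ₂ B = plan (Prod.snd ⁻¹' B) := by
    rw [← hsnd, Measure.snd_apply hBmeas]
  rw [hμ₂B]
  by_cases hcase : 1 - (δ + t ^ 2) ≤ 0
  · rw [ENNReal.ofReal_eq_zero.mpr hcase]
    exact zero_le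
  · push_neg at hcase
    have hsplit : ENNReal.ofReal (1 - δ) =
        ENNReal.ofReal (1 - (δ + t ^ 2)) + ENNReal.ofReal (t ^ 2) := by
      rw [← ENNReal.ofReal_add hcase.le (sq_nonneg t)]
      ring_nf
    rw [hsplit] at hchain
    exact (ENNReal.add_le_add_iff_right ENNReal.ofReal_ne_top).mp hchain
end
end

section
/- Fix j ∈ {1, …, N}. Then every v ∈ C¹(ℝ^d) with ∫(|∇v|² + v²) ρ_j dx < ∞ and ⟨v, q_j⟩_{ρ_j} = 0 satisfies ∫_{ℝ^d} |∇v|² ρ_j dx ≥ Θ(1 − S) ∫_{ℝ^d} v² ρ_j dx. -/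
open MeasureTheory Real

noncomputable section

/-- The set of Rayleigh quotients `(∫ |∇f|² ρk dx) / (∫ f² ρk dx)` over admissible
`C¹` test functions `f` with `∫ f ρk dx = 0` and `∫ f² ρk dx > 0`; the indivisibility
parameter `Θ_k` of the paper is its infimum. -/
def rayleighSet {d : ℕ} (ρk : EuclideanSpace ℝ (Fin d) → ℝ) : Set ℝ :=
  {R | ∃ f : EuclideanSpace ℝ (Fin d) → ℝ,
      ContDiff ℝ 1 f ∧
      Integrable (fun x => ‖gradient f x‖ ^ 2 * ρk x) ∧
      Integrable (fun x => f x ^ 2 * ρk x) ∧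
      (∫ x, f x * ρk x) = 0 ∧
      0 < ∫ x, f x ^ 2 * ρk x ∧
      R = (∫ x, ‖gradient f x‖ ^ 2 * ρk x) / ∫ x, f x ^ 2 * ρk x}

lemma cs_integral {α : Type*} [MeasurableSpace α] {μ : Measure α} {f g : α → ℝ}
    (hfm : AEStronglyMeasurable f μ) (hgm : AEStronglyMeasurable g μ)
    (hf : Integrable (fun x => f x ^ 2) μ) (hg : Integrable (fun x => g x ^ 2) μ) :
    (∫ x, f x * g x ∂μ) ^ 2 ≤ (∫ x, f x ^ 2 ∂μ) * ∫ x, g x ^ 2 ∂μ := by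
  have hf2 : MemLp f 2 μ := (memLp_two_iff_integrable_sq hfm).2 hf
  have hg2 : MemLp g 2 μ := (memLp_two_iff_integrable_sq hgm).2 hg
  set F : Lp ℝ 2 μ := hf2.toLp f
  set G : Lp ℝ 2 μ := hg2.toLp g
  have hFG : (inner ℝ F G : ℝ) = ∫ x, f x * g x ∂μ := by
    rw [L2.inner_def]
    apply integral_congr_ae
    filter_upwards [hf2.coeFn_toLp, hg2.coeFn_toLp] with x hx hy
    simp [F, G, hx, hy, RCLike.inner_apply, conj_trivial, mul_comm]
  have hFF : (inner ℝ F F : ℝ) = ∫ x, f x ^ 2 ∂μ := by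
    rw [L2.inner_def]
    apply integral_congr_ae
    filter_upwards [hf2.coeFn_toLp] with x hx
    simp [F, G, hx, RCLike.inner_apply, conj_trivial, sq]
  have hGG : (inner ℝ G G : ℝ) = ∫ x, g x ^ 2 ∂μ := by
    rw [L2.inner_def]
    apply integral_congr_ae
    filter_upwards [hg2.coeFn_toLp] with x hx
    simp [F, G, hx, RCLike.inner_apply, conj_trivial, sq]
  have := real_inner_mul_inner_self_le F G
  rw [hFG, hFF, hGG] at this
  nlinarith [this]

set_option maxHeartbeats 1000000 in
/-- for every `C¹` function `v` with finite `H¹(ρ_j)`-norm which is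
orthogonal to `q_j = √(w_j ρ_j/ρ)` in `L²(ρ_j)`, one has
`∫ |∇v|² ρ_j dx ≥ Θ (1 - S) ∫ v² ρ_j dx`. -/
theorem statement5 {d : ℕ} {N : ℕ} (hN : 2 ≤ N)
    (w : Fin N → ℝ) (hw : ∀ k, 0 < w k) (hw1 : ∑ k, w k = 1)
    (ρ : Fin N → EuclideanSpace ℝ (Fin d) → ℝ)
    (hρC1 : ∀ k, ContDiff ℝ 1 (ρ k)) (hρnn : ∀ k x, 0 ≤ ρ k x)
    (hρ1 : ∀ k, ∫ x, ρ k x = 1)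
    (ρtot : EuclideanSpace ℝ (Fin d) → ℝ)
    (hρtot : ρtot = fun x => ∑ k, w k * ρ k x)
    (hpos : ∀ x, 0 < ρtot x)
    (S : ℝ)
    (hS : IsGreatest
      ((fun p : Fin N × Fin N => ∫ x, ρ p.1 x * ρ p.2 x / ρtot x) ''
        {p | p.1 ≠ p.2}) S)
    (Θ : ℝ) (hΘnn : 0 ≤ Θ)
    (hΘ : IsLeast {a : ℝ | ∃ k, a = sInf (rayleighSet (ρ k))} Θ)
    (j : Fin N)
    (v : EuclideanSpace ℝ (Fin d) → ℝ) (hv : ContDiff ℝ 1 v)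
    (hv1 : Integrable (fun x => ‖gradient v x‖ ^ 2 * ρ j x))
    (hv2 : Integrable (fun x => v x ^ 2 * ρ j x))
    (horth : ∫ x, v x * Real.sqrt (w j * ρ j x / ρtot x) * ρ j x = 0) :
    Θ * (1 - S) * ∫ x, v x ^ 2 * ρ j x ≤ ∫ x, ‖gradient v x‖ ^ 2 * ρ j x := by
  classical
  set q : EuclideanSpace ℝ (Fin d) → ℝ := fun x => Real.sqrt (w j * ρ j x / ρtot x) with hqdef
  -- basic facts
  have hvc : Continuous v := hv.continuous
  have hcρ : ∀ k, Continuous (ρ k) := fun k => (hρC1 k).continuous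
  have hρtotc : Continuous ρtot := by
    rw [hρtot]; exact continuous_finset_sum _ fun k _ => continuous_const.mul (hcρ k)
  have hρint : ∀ k, Integrable (ρ k) := by
    intro k
    by_contra h
    have := hρ1 k
    rw [integral_undef h] at this
    norm_num at this
  have hwρ_le : ∀ k x, w k * ρ k x ≤ ρtot x := by
    intro k x
    rw [hρtot]
    exact Finset.single_le_sum (f := fun i => w i * ρ i x)
      (fun i _ => mul_nonneg (hw i).le (hρnn i x)) (Finset.mem_univ k)
  have hq0 : ∀ x, 0 ≤ q x := fun x => Real.sqrt_nonneg _
  have hq1 : ∀ x, q x ≤ 1 := by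
    intro x
    rw [hqdef]
    rw [show (1 : ℝ) = Real.sqrt 1 by simp]
    apply Real.sqrt_le_sqrt
    rw [div_le_one (hpos x)]
    exact hwρ_le j x
  have hqc : Continuous q := by
    apply Real.continuous_sqrt.comp
    exact (continuous_const.mul (hcρ j)).div hρtotc fun x => (hpos x).ne'
  have hqsq : ∀ x, q x ^ 2 = w j * ρ j x / ρtot x := fun x =>
    Real.sq_sqrt (div_nonneg (mul_nonneg (hw j).le (hρnn j x)) (hpos x).le)
  -- integrability of various products
  have habs_v : ∀ x, |v x| ≤ (v x ^ 2 + 1) / 2 := by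
    intro x
    nlinarith [sq_nonneg (|v x| - 1), sq_abs (v x), abs_nonneg (v x)]
  have hvρ : Integrable (fun x => v x * ρ j x) := by
    apply Integrable.mono' ((hv2.add (hρint j)).div_const 2)
      ((hvc.mul (hcρ j)).aestronglyMeasurable)
    filter_upwards with x
    simp only [Pi.mul_apply, Pi.pow_apply]
    rw [norm_mul, norm_of_nonneg (hρnn j x)]
    calc ‖v x‖ * ρ j x ≤ ((v x ^ 2 + 1) / 2) * ρ j x :=
          mul_le_mul_of_nonneg_right (habs_v x) (hρnn j x)
      _ = (v x ^ 2 * ρ j x + ρ j x) / 2 := by ring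
  have hqρ : Integrable (fun x => q x * ρ j x) := by
    apply Integrable.mono' (hρint j) ((hqc.mul (hcρ j)).aestronglyMeasurable)
    filter_upwards with x
    simp only [Pi.mul_apply, Pi.pow_apply]
    rw [norm_mul, norm_of_nonneg (hρnn j x), norm_of_nonneg (hq0 x)]
    exact mul_le_of_le_one_left (hρnn j x) (hq1 x)
  have hq2ρ : Integrable (fun x => q x ^ 2 * ρ j x) := by
    apply Integrable.mono' (hρint j) (((hqc.pow 2).mul (hcρ j)).aestronglyMeasurable)
    filter_upwards with x
    simp only [Pi.mul_apply, Pi.pow_apply]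
    rw [norm_mul, norm_of_nonneg (hρnn j x), norm_of_nonneg (sq_nonneg _)]
    apply mul_le_of_le_one_left (hρnn j x)
    nlinarith [hq0 x, hq1 x]
  have hvqρ : Integrable (fun x => v x * q x * ρ j x) := by
    apply Integrable.mono' ((hv2.add (hρint j)).div_const 2)
      (((hvc.mul hqc).mul (hcρ j)).aestronglyMeasurable)
    filter_upwards with x
    simp only [Pi.mul_apply, Pi.pow_apply]
    rw [norm_mul, norm_of_nonneg (hρnn j x), norm_mul, norm_of_nonneg (hq0 x)]
    calc ‖v x‖ * q x * ρ j x ≤ ‖v x‖ * 1 * ρ j x := by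
          apply mul_le_mul_of_nonneg_right _ (hρnn j x)
          exact mul_le_mul_of_nonneg_left (hq1 x) (norm_nonneg _)
      _ = ‖v x‖ * ρ j x := by ring
      _ ≤ ((v x ^ 2 + 1) / 2) * ρ j x := mul_le_mul_of_nonneg_right (habs_v x) (hρnn j x)
      _ = (v x ^ 2 * ρ j x + ρ j x) / 2 := by ring
  -- the mean and the centered function
  set c : ℝ := ∫ x, v x * ρ j x with hcdef
  have hfρ0 : ∫ x, (v x - c) * ρ j x = 0 := by
    have heq : (fun x => (v x - c) * ρ j x) = fun x => v x * ρ j x - c * ρ j x := by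
      funext x; ring
    rw [heq, integral_sub hvρ ((hρint j).const_mul c), integral_const_mul, hρ1 j]
    simp [hcdef]
  have hf2ρ : Integrable (fun x => (v x - c) ^ 2 * ρ j x) := by
    have heq : (fun x => (v x - c) ^ 2 * ρ j x)
        = fun x => v x ^ 2 * ρ j x - (2 * c) * (v x * ρ j x) + c ^ 2 * ρ j x := by
      funext x; ring
    rw [heq]
    exact (hv2.sub (hvρ.const_mul _)).add ((hρint j).const_mul _)
  set F : ℝ := ∫ x, (v x - c) ^ 2 * ρ j x with hFdef
  set A : ℝ := ∫ x, q x * ρ j x with hAdef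
  set T : ℝ := ∫ x, q x ^ 2 * ρ j x with hTdef
  set I2 : ℝ := ∫ x, v x ^ 2 * ρ j x with hI2def
  set I1 : ℝ := ∫ x, ‖gradient v x‖ ^ 2 * ρ j x with hI1def
  have hI2nn : 0 ≤ I2 := integral_nonneg fun x => mul_nonneg (sq_nonneg _) (hρnn j x)
  have hI1nn : 0 ≤ I1 := integral_nonneg fun x => mul_nonneg (sq_nonneg _) (hρnn j x)
  have hFnn : 0 ≤ F := integral_nonneg fun x => mul_nonneg (sq_nonneg _) (hρnn j x)
  have hS0 : 0 ≤ S := by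
    obtain ⟨p, _, rfl⟩ := hS.1
    exact integral_nonneg fun x =>
      div_nonneg (mul_nonneg (hρnn _ x) (hρnn _ x)) (hpos x).le
  by_cases hS1 : S < 1
  swap
  · -- trivial case `S ≥ 1`
    push_neg at hS1
    have : Θ * (1 - S) * I2 ≤ 0 := by
      apply mul_nonpos_of_nonpos_of_nonneg _ hI2nn
      exact mul_nonpos_of_nonneg_of_nonpos hΘnn (by linarith)
    linarith
  -- decomposition of `I2`
  have hI2eq : I2 = F + c ^ 2 := by
    have heq : (fun x => v x ^ 2 * ρ j x)
        = fun x => ((v x - c) ^ 2 * ρ j x + (2 * c) * (v x * ρ j x)) - c ^ 2 * ρ j x := by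
      funext x; ring
    have hint1 : Integrable (fun x => (v x - c) ^ 2 * ρ j x + (2 * c) * (v x * ρ j x)) :=
      hf2ρ.add (hvρ.const_mul _)
    have hint2 : Integrable (fun x => c ^ 2 * ρ j x) := (hρint j).const_mul _
    rw [hI2def, heq, integral_sub hint1 hint2,
      integral_add hf2ρ (hvρ.const_mul _), integral_const_mul, integral_const_mul, hρ1 j]
    rw [hFdef, hcdef]
    ring
  -- orthogonality gives `B = -(c * A)` with `B = ∫ (v - c) q ρ j`
  have hfqρ : Integrable (fun x => (v x - c) * q x * ρ j x) := by
    have heq : (fun x => (v x - c) * q x * ρ j x)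
        = fun x => v x * q x * ρ j x - c * (q x * ρ j x) := by
      funext x; ring
    rw [heq]
    exact hvqρ.sub (hqρ.const_mul _)
  set B : ℝ := ∫ x, (v x - c) * q x * ρ j x with hBdef
  have hB : B + c * A = 0 := by
    have heq : (fun x => v x * q x * ρ j x)
        = fun x => (v x - c) * q x * ρ j x + c * (q x * ρ j x) := by
      funext x; ring
    have h0 : ∫ x, v x * q x * ρ j x = 0 := horth
    have hint3 : Integrable (fun x => c * (q x * ρ j x)) := hqρ.const_mul _
    rw [heq, integral_add hfqρ hint3, integral_const_mul] at h0
    rw [hBdef, hAdef]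
    linarith [h0]
  -- lower bound for T
  have hgk_int : ∀ k, Integrable (fun x => ρ k x * ρ j x / ρtot x) := by
    intro k
    apply Integrable.mono' ((hρint j).const_mul (1 / w k))
      (((hcρ k).mul (hcρ j)).div hρtotc (fun x => (hpos x).ne') |>.aestronglyMeasurable)
    filter_upwards with x
    show ‖ρ k x * ρ j x / ρtot x‖ ≤ 1 / w k * ρ j x
    rw [norm_of_nonneg (div_nonneg (mul_nonneg (hρnn k x) (hρnn j x)) (hpos x).le)]
    have hb : ρ k x / ρtot x ≤ 1 / w k := by
      rw [div_le_div_iff₀ (hpos x) (hw k)]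
      nlinarith [hwρ_le k x]
    calc ρ k x * ρ j x / ρtot x = (ρ k x / ρtot x) * ρ j x := by ring
      _ ≤ (1 / w k) * ρ j x := mul_le_mul_of_nonneg_right hb (hρnn j x)
  have hdecomp : (fun x => q x ^ 2 * ρ j x)
      = fun x => ρ j x - ∑ k ∈ Finset.univ.erase j, w k * (ρ k x * ρ j x / ρtot x) := by
    funext x
    have hsum : ∑ k, w k * (ρ k x * ρ j x / ρtot x) = ρ j x := by
      have : ∑ k, w k * (ρ k x * ρ j x / ρtot x)
          = (∑ k, w k * ρ k x) * (ρ j x / ρtot x) := by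
        rw [Finset.sum_mul]
        exact Finset.sum_congr rfl fun k _ => by ring
      have hρtotx : ρtot x = ∑ k, w k * ρ k x := by rw [hρtot]
      rw [this, ← hρtotx, mul_comm, div_mul_cancel₀ _ (hpos x).ne']
    have hsplit := Finset.add_sum_erase Finset.univ
      (fun k => w k * (ρ k x * ρ j x / ρtot x)) (Finset.mem_univ j)
    rw [hqsq x]
    have h2 : ∑ k ∈ Finset.univ.erase j, w k * (ρ k x * ρ j x / ρtot x)
        = ρ j x - w j * (ρ j x * ρ j x / ρtot x) := by
      linarith [hsplit, hsum]
    rw [h2]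
    ring
  have hT_eq : T = 1 - ∑ k ∈ Finset.univ.erase j, w k * ∫ x, ρ k x * ρ j x / ρtot x := by
    rw [hTdef, hdecomp,
      integral_sub (hρint j) (integrable_finset_sum _ fun k _ => (hgk_int k).const_mul _),
      hρ1 j, integral_finset_sum _ fun k _ => (hgk_int k).const_mul _]
    simp_rw [integral_const_mul]
  have hIk_le : ∀ k ∈ Finset.univ.erase j, (∫ x, ρ k x * ρ j x / ρtot x) ≤ S := by
    intro k hk
    apply hS.2
    exact ⟨(k, j), Finset.ne_of_mem_erase hk, rfl⟩
  have hsum_w : ∑ k ∈ Finset.univ.erase j, w k = 1 - w j := by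
    have := Finset.add_sum_erase Finset.univ w (Finset.mem_univ j)
    rw [hw1] at this
    linarith
  have hTS : 1 - S ≤ T := by
    have h1 : ∑ k ∈ Finset.univ.erase j, w k * ∫ x, ρ k x * ρ j x / ρtot x
        ≤ ∑ k ∈ Finset.univ.erase j, w k * S :=
      Finset.sum_le_sum fun k hk => mul_le_mul_of_nonneg_left (hIk_le k hk) (hw k).le
    rw [← Finset.sum_mul, hsum_w] at h1
    have h2 : (1 - w j) * S ≤ S := by nlinarith [(hw j).le, hw j]
    rw [hT_eq]
    linarith
  have hTpos : 0 < T := by linarith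
  have hTA : T ≤ A := by
    apply integral_mono hq2ρ hqρ
    intro x
    apply mul_le_mul_of_nonneg_right _ (hρnn j x)
    nlinarith [hq0 x, hq1 x]
  have hApos : 0 < A := lt_of_lt_of_le hTpos hTA
  -- Cauchy-Schwarz for `(v - c)√ρ` and `(q - A)√ρ`
  have hsqrtρ : ∀ x, Real.sqrt (ρ j x) ^ 2 = ρ j x := fun x => Real.sq_sqrt (hρnn j x)
  have hsqrtc : Continuous fun x => Real.sqrt (ρ j x) := Real.continuous_sqrt.comp (hcρ j)
  have hqA2ρ : Integrable (fun x => (q x - A) ^ 2 * ρ j x) := by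
    have heq : (fun x => (q x - A) ^ 2 * ρ j x)
        = fun x => q x ^ 2 * ρ j x - (2 * A) * (q x * ρ j x) + A ^ 2 * ρ j x := by
      funext x; ring
    rw [heq]
    exact (hq2ρ.sub (hqρ.const_mul _)).add ((hρint j).const_mul _)
  have hCS : B ^ 2 ≤ F * (T - A ^ 2) := by
    have key := cs_integral (μ := volume)
      (f := fun x => (v x - c) * Real.sqrt (ρ j x))
      (g := fun x => (q x - A) * Real.sqrt (ρ j x))
      (((hvc.sub continuous_const).mul hsqrtc).aestronglyMeasurable)
      (((hqc.sub continuous_const).mul hsqrtc).aestronglyMeasurable)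
      (by simpa only [mul_pow, hsqrtρ] using hf2ρ)
      (by simpa only [mul_pow, hsqrtρ] using hqA2ρ)
    have e1 : (∫ x, ((v x - c) * Real.sqrt (ρ j x)) * ((q x - A) * Real.sqrt (ρ j x)))
        = B := by
      have heq : (fun x => ((v x - c) * Real.sqrt (ρ j x)) * ((q x - A) * Real.sqrt (ρ j x)))
          = fun x => (v x - c) * q x * ρ j x - A * ((v x - c) * ρ j x) := by
        funext x
        rw [show ((v x - c) * Real.sqrt (ρ j x)) * ((q x - A) * Real.sqrt (ρ j x))
            = (v x - c) * (q x - A) * (Real.sqrt (ρ j x)) ^ 2 by ring, hsqrtρ x]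
        ring
      have hfρ_int : Integrable (fun x => (v x - c) * ρ j x) := by
        have heq2 : (fun x => (v x - c) * ρ j x) = fun x => v x * ρ j x - c * ρ j x := by
          funext x; ring
        rw [heq2]
        exact hvρ.sub ((hρint j).const_mul _)
      rw [heq, integral_sub hfqρ (hfρ_int.const_mul _), integral_const_mul, hfρ0]
      simp [hBdef]
    have e2 : (∫ x, ((v x - c) * Real.sqrt (ρ j x)) ^ 2) = F := by
      rw [hFdef]
      congr 1
      funext x
      rw [mul_pow, hsqrtρ]
    have e3 : (∫ x, ((q x - A) * Real.sqrt (ρ j x)) ^ 2) = T - A ^ 2 := by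
      have heq : (fun x => ((q x - A) * Real.sqrt (ρ j x)) ^ 2)
          = fun x => (q x ^ 2 * ρ j x - (2 * A) * (q x * ρ j x)) + A ^ 2 * ρ j x := by
        funext x
        rw [mul_pow, hsqrtρ]
        ring
      have hint4 : Integrable (fun x => q x ^ 2 * ρ j x - (2 * A) * (q x * ρ j x)) :=
        hq2ρ.sub (hqρ.const_mul _)
      have hint5 : Integrable (fun x => A ^ 2 * ρ j x) := (hρint j).const_mul _
      rw [heq, integral_add hint4 hint5,
        integral_sub hq2ρ (hqρ.const_mul _), integral_const_mul, integral_const_mul, hρ1 j]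
      rw [hTdef, hAdef]
      ring
    rw [e1, e2, e3] at key
    exact key
  -- from CS and orthogonality: (1 - S) c² ≤ S F
  have hcA : c ^ 2 * A ^ 2 ≤ F * (T - A ^ 2) := by
    have hBeq : B = -(c * A) := by linarith [hB]
    have hBsq : B ^ 2 = c ^ 2 * A ^ 2 := by rw [hBeq]; ring
    linarith [hCS, hBsq.symm.le]
  have hkey : (1 - S) * c ^ 2 ≤ S * F := by
    have hAT : 0 ≤ (A - T) * (A + T) := mul_nonneg (by linarith) (by linarith)
    have he1 : c ^ 2 * T ^ 2 ≤ c ^ 2 * A ^ 2 := by nlinarith [sq_nonneg c, hAT]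
    have he2 : F * (T - A ^ 2) ≤ F * (T - T ^ 2) := by nlinarith [hFnn, hAT]
    have h5 : c ^ 2 * T ≤ F * (1 - T) := by
      have h4 : c ^ 2 * T * T ≤ F * (1 - T) * T := by nlinarith [he1, he2, hcA]
      exact le_of_mul_le_mul_right h4 hTpos
    have p1 : (1 - S) * c ^ 2 ≤ T * c ^ 2 := mul_le_mul_of_nonneg_right hTS (sq_nonneg c)
    have p2 : F * (1 - T) ≤ F * S := mul_le_mul_of_nonneg_left (by linarith [hTS]) hFnn
    nlinarith [p1, p2, h5]
  have hI2F : (1 - S) * I2 ≤ F := by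
    rw [hI2eq]
    nlinarith [hkey, mul_nonneg hS0 hFnn]
  -- Rayleigh quotient: Θ F ≤ I1
  have hΘF : Θ * F ≤ I1 := by
    rcases eq_or_lt_of_le hFnn with hF0 | hFpos
    · rw [← hF0]; simpa using hI1nn
    · have hgrad : ∀ x, gradient (fun y => v y - c) x = gradient v x := by
        intro x
        unfold gradient
        rw [fderiv_sub_const]
      have hmem : I1 / F ∈ rayleighSet (ρ j) := by
        refine ⟨fun y => v y - c, hv.sub contDiff_const, ?_, hf2ρ, hfρ0, hFpos, ?_⟩
        · simpa only [hgrad] using hv1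
        · congr 1
          rw [hI1def]
          congr 1
          funext x
          rw [hgrad]
      have hbdd : BddBelow (rayleighSet (ρ j)) := by
        refine ⟨0, fun R hR => ?_⟩
        obtain ⟨f, _, _, _, _, hfp, rfl⟩ := hR
        exact div_nonneg (integral_nonneg fun x => mul_nonneg (sq_nonneg _) (hρnn j x)) hfp.le
      have hΘle : Θ ≤ I1 / F := le_trans (hΘ.2 ⟨j, rfl⟩) (csInf_le hbdd hmem)
      calc Θ * F ≤ (I1 / F) * F := mul_le_mul_of_nonneg_right hΘle hFnn
        _ = I1 := by field_simp
  -- conclusion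
  calc Θ * (1 - S) * I2 = Θ * ((1 - S) * I2) := by ring
    _ ≤ Θ * F := mul_le_mul_of_nonneg_left hI2F hΘnn
    _ ≤ I1 := hΘF
end
end

section
/- Assume S < ∞ and fix j ∈ {1, …, N}. Then every measurable u : X → ℝ with ∫_X u² ρ d𝔪 = 1 and ⟨u, q_j⟩_ρ = 0 satisfies |⟨u, q_j⟩_{ρ_j}| ≤ √((1 − w_j) S / w_j). -/
open MeasureTheory Real

noncomputable section

lemma rpow_two' (y : ℝ) : y ^ (2:ℝ) = y ^ 2 := by
  rw [← Real.rpow_natCast y 2]; norm_num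

lemma cs_int {X : Type*} [MeasurableSpace X] (m : Measure X) {f g : X → ℝ}
    (hfm : AEStronglyMeasurable f m) (hgm : AEStronglyMeasurable g m)
    (hf2 : Integrable (fun x => f x ^ 2) m) (hg2 : Integrable (fun x => g x ^ 2) m) :
    |∫ x, f x * g x ∂m| ≤ Real.sqrt (∫ x, f x ^ 2 ∂m) * Real.sqrt (∫ x, g x ^ 2 ∂m) := by
  have hfg : Integrable (fun x => f x * g x) m := by
    refine Integrable.mono' ((hf2.add hg2).div_const 2) (hfm.mul hgm) ?_
    filter_upwards with x
    simp only [Real.norm_eq_abs, abs_mul, Pi.add_apply]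
    nlinarith [sq_nonneg (|f x| - |g x|), sq_abs (f x), sq_abs (g x), abs_nonneg (f x), abs_nonneg (g x)]
  have h2 : (2:ℝ).HolderConjugate 2 := by constructor <;> norm_num
  have hmemf : MemLp (fun x => |f x|) (ENNReal.ofReal 2) m := by
    rw [show ENNReal.ofReal 2 = 2 by norm_num]
    refine (memLp_two_iff_integrable_sq ?_).2 ?_
    · simpa [Real.norm_eq_abs] using hfm.norm
    · simpa [sq_abs] using hf2
  have hmemg : MemLp (fun x => |g x|) (ENNReal.ofReal 2) m := by
    rw [show ENNReal.ofReal 2 = 2 by norm_num]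
    refine (memLp_two_iff_integrable_sq ?_).2 ?_
    · simpa [Real.norm_eq_abs] using hgm.norm
    · simpa [sq_abs] using hg2
  have key := integral_mul_le_Lp_mul_Lq_of_nonneg h2
    (Filter.Eventually.of_forall (fun x => abs_nonneg (f x)))
    (Filter.Eventually.of_forall (fun x => abs_nonneg (g x))) hmemf hmemg
  calc |∫ x, f x * g x ∂m| ≤ ∫ x, |f x| * |g x| ∂m := by
        simpa [Real.norm_eq_abs, abs_mul] using norm_integral_le_integral_norm (fun x => f x * g x) (μ := m)
    _ ≤ (∫ x, |f x| ^ (2:ℝ) ∂m) ^ ((1:ℝ)/2) * (∫ x, |g x| ^ (2:ℝ) ∂m) ^ ((1:ℝ)/2) := key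
    _ = Real.sqrt (∫ x, f x ^ 2 ∂m) * Real.sqrt (∫ x, g x ^ 2 ∂m) := by
        rw [← Real.sqrt_eq_rpow, ← Real.sqrt_eq_rpow]
        congr 1 <;> congr 1 <;>
          exact integral_congr_ae (Filter.Eventually.of_forall fun x => by
            simp only [rpow_two', sq_abs])

/-- if `u` is normalized in `L²(ρ)` and orthogonal to `q_j` in `L²(ρ)`,
then `|⟨u, q_j⟩_{ρ_j}| ≤ √((1 - w_j) S / w_j)`. -/
theorem statement6 {X : Type*} [MeasurableSpace X] (m : Measure X)
    {N : ℕ} (hN : 2 ≤ N)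
    (w : Fin N → ℝ) (hw : ∀ k, 0 < w k) (hw1 : ∑ k, w k = 1)
    (ρ : Fin N → X → ℝ) (hmeas : ∀ k, Measurable (ρ k)) (hnn : ∀ k x, 0 ≤ ρ k x)
    (hone : ∀ k, ∫ x, ρ k x ∂m = 1)
    (ρtot : X → ℝ) (hρtot : ρtot = fun x => ∑ k, w k * ρ k x)
    (hpos : ∀ x, 0 < ρtot x)
    (S : ℝ)
    (hS : IsGreatest
      ((fun p : Fin N × Fin N => ∫ x, ρ p.1 x * ρ p.2 x / ρtot x ∂m) ''
        {p | p.1 ≠ p.2}) S)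
    (j : Fin N)
    (u : X → ℝ) (hu : Measurable u)
    (hnorm : ∫ x, u x ^ 2 * ρtot x ∂m = 1)
    (horth : ∫ x, u x * Real.sqrt (w j * ρ j x / ρtot x) * ρtot x ∂m = 0) :
    |∫ x, u x * Real.sqrt (w j * ρ j x / ρtot x) * ρ j x ∂m| ≤
      Real.sqrt ((1 - w j) * S / w j) := by
  -- basic facts
  have hρm : Measurable ρtot := by
    rw [hρtot]; exact Finset.measurable_sum _ fun k _ => (measurable_const.mul (hmeas k))
  have hρnn : ∀ x, 0 ≤ ρtot x := fun x => (hpos x).le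
  have hle : ∀ k x, w k * ρ k x ≤ ρtot x := by
    intro k x
    rw [hρtot]
    exact Finset.single_le_sum (f := fun i => w i * ρ i x)
      (fun i _ => mul_nonneg (hw i).le (hnn i x)) (Finset.mem_univ k)
  have hwj1 : w j ≤ 1 := by
    rw [← hw1]
    exact Finset.single_le_sum (fun i _ => (hw i).le) (Finset.mem_univ j)
  have intρ : ∀ k, Integrable (ρ k) m := fun k => integrable_of_integral_eq_one (hone k)
  have hSnn : 0 ≤ S := by
    obtain ⟨p, _, hpS⟩ := hS.1
    rw [← hpS]
    exact integral_nonneg fun x =>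
      div_nonneg (mul_nonneg (hnn _ x) (hnn _ x)) (hρnn x)
  have intjk : ∀ k, Integrable (fun x => ρ j x * ρ k x / ρtot x) m := by
    intro k
    refine Integrable.mono' ((intρ j).div_const (w k))
      (((hmeas j).mul (hmeas k)).div hρm).aestronglyMeasurable ?_
    filter_upwards with x
    rw [Real.norm_eq_abs, abs_of_nonneg (div_nonneg (mul_nonneg (hnn j x) (hnn k x)) (hρnn x))]
    rw [div_le_div_iff₀ (hpos x) (hw k)]
    have h1 := hle k x
    nlinarith [hnn j x, hnn k x, hpos x]
  have hSk : ∀ k, k ≠ j → ∫ x, ρ j x * ρ k x / ρtot x ∂m ≤ S := by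
    intro k hk
    exact hS.2 ⟨(j, k), hk.symm, rfl⟩
  set q : X → ℝ := fun x => Real.sqrt (w j * ρ j x / ρtot x) with hq
  have hqarg : ∀ x, 0 ≤ w j * ρ j x / ρtot x := fun x =>
    div_nonneg (mul_nonneg (hw j).le (hnn j x)) (hρnn x)
  have hq2 : ∀ x, q x ^ 2 = w j * ρ j x / ρtot x := fun x => Real.sq_sqrt (hqarg x)
  have hqm : Measurable q := ((measurable_const.mul (hmeas j)).div hρm).sqrt
  set D : X → ℝ := fun x => ρtot x - w j * ρ j x with hD
  have hDnn : ∀ x, 0 ≤ D x := fun x => sub_nonneg.2 (hle j x)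
  have hDle : ∀ x, D x ≤ ρtot x := fun x =>
    sub_le_self _ (mul_nonneg (hw j).le (hnn j x))
  have hDsum : ∀ x, D x = ∑ k ∈ Finset.univ.erase j, w k * ρ k x := by
    intro x
    rw [hD]
    simp only [hρtot]
    rw [← Finset.add_sum_erase _ _ (Finset.mem_univ j)]
    ring
  set f : X → ℝ := fun x => u x * Real.sqrt (ρtot x) with hf
  set g : X → ℝ := fun x => q x * D x / Real.sqrt (ρtot x) with hg
  have hfm : Measurable f := hu.mul hρm.sqrt
  have hgm : Measurable g := (hqm.mul (hρm.sub (measurable_const.mul (hmeas j)))).div hρm.sqrt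
  have hf2eq : ∀ x, f x ^ 2 = u x ^ 2 * ρtot x := by
    intro x
    rw [hf]
    rw [mul_pow, Real.sq_sqrt (hρnn x)]
  have hf2 : Integrable (fun x => f x ^ 2) m := by
    refine (integrable_of_integral_eq_one hnorm).congr ?_
    filter_upwards with x
    exact (hf2eq x).symm
  have hf2int : ∫ x, f x ^ 2 ∂m = 1 := by
    rw [← hnorm]
    exact integral_congr_ae (Filter.Eventually.of_forall hf2eq)
  -- bound on g²
  set h : X → ℝ := fun x => w j * ∑ k ∈ Finset.univ.erase j, w k * (ρ j x * ρ k x / ρtot x) with hh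
  have hg2le : ∀ x, g x ^ 2 ≤ h x := by
    intro x
    have hsq : g x ^ 2 = w j * ρ j x * (D x / ρtot x) ^ 2 := by
      rw [hg]
      rw [div_pow, mul_pow, hq2 x, Real.sq_sqrt (hρnn x), div_pow]
      field_simp
    have ht0 : 0 ≤ D x / ρtot x := div_nonneg (hDnn x) (hρnn x)
    have ht1 : D x / ρtot x ≤ 1 := (div_le_one (hpos x)).2 (hDle x)
    have step : g x ^ 2 ≤ w j * ρ j x * (D x / ρtot x) := by
      rw [hsq]
      have : (D x / ρtot x) ^ 2 ≤ D x / ρtot x := by nlinarith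
      exact mul_le_mul_of_nonneg_left this (mul_nonneg (hw j).le (hnn j x))
    refine step.trans_eq ?_
    simp only [hh]
    rw [hDsum x, Finset.sum_div, Finset.mul_sum, Finset.mul_sum]
    refine Finset.sum_congr rfl fun k _ => ?_
    field_simp
  have hhnn : ∀ x, 0 ≤ h x := by
    intro x
    refine mul_nonneg (hw j).le (Finset.sum_nonneg fun k _ => ?_)
    exact mul_nonneg (hw k).le (div_nonneg (mul_nonneg (hnn j x) (hnn k x)) (hρnn x))
  have hhint : Integrable h m := by
    refine (integrable_finset_sum _ fun k _ => ((intjk k).const_mul (w k))).const_mul (w j)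
  have hhval : ∫ x, h x ∂m ≤ w j * ((1 - w j) * S) := by
    simp only [hh]
    rw [integral_const_mul, integral_finset_sum _ (fun k _ => (intjk k).const_mul (w k))]
    refine mul_le_mul_of_nonneg_left ?_ (hw j).le
    have : ∑ k ∈ Finset.univ.erase j, ∫ x, w k * (ρ j x * ρ k x / ρtot x) ∂m
        ≤ ∑ k ∈ Finset.univ.erase j, w k * S := by
      refine Finset.sum_le_sum fun k hk => ?_
      rw [integral_const_mul]
      exact mul_le_mul_of_nonneg_left (hSk k (Finset.ne_of_mem_erase hk)) (hw k).le
    refine this.trans ?_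
    rw [← Finset.sum_mul]
    have : ∑ k ∈ Finset.univ.erase j, w k = 1 - w j := by
      rw [Finset.sum_erase_eq_sub (Finset.mem_univ j), hw1]
    rw [this]
  have hg2int : Integrable (fun x => g x ^ 2) m := by
    refine Integrable.mono' hhint (hgm.pow_const 2).aestronglyMeasurable ?_
    filter_upwards with x
    rw [Real.norm_eq_abs, abs_of_nonneg (sq_nonneg _)]
    exact hg2le x
  have hIg2 : ∫ x, g x ^ 2 ∂m ≤ w j * ((1 - w j) * S) := by
    refine le_trans (integral_mono hg2int hhint hg2le) hhval
  -- Cauchy–Schwarz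
  have hCS := cs_int m hfm.aestronglyMeasurable hgm.aestronglyMeasurable hf2 hg2int
  rw [hf2int, Real.sqrt_one, one_mul] at hCS
  have hCS2 : |∫ x, f x * g x ∂m| ≤ Real.sqrt (w j * ((1 - w j) * S)) :=
    hCS.trans (Real.sqrt_le_sqrt hIg2)
  -- relate ∫ f g with target integral
  have hfgen : ∀ x, f x * g x = u x * q x * D x := by
    intro x
    rw [hf, hg]
    have hs : Real.sqrt (ρtot x) ≠ 0 := ne_of_gt (Real.sqrt_pos.2 (hpos x))
    field_simp
  have hint_uqρ : Integrable (fun x => u x * q x * ρtot x) m := by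
    refine Integrable.mono' ((hf2.add ((intρ j).const_mul (w j))).div_const 2)
      ((hu.mul hqm).mul hρm).aestronglyMeasurable ?_
    filter_upwards with x
    simp only [Real.norm_eq_abs, Pi.add_apply]
    have hqnn : (0:ℝ) ≤ q x := Real.sqrt_nonneg _
    have hb : (q x * Real.sqrt (ρtot x)) ^ 2 = w j * ρ j x := by
      rw [mul_pow, hq2 x, Real.sq_sqrt (hρnn x)]
      rw [div_mul_eq_mul_div, mul_div_assoc, div_self (hpos x).ne', mul_one]
    have hss : Real.sqrt (ρtot x) * Real.sqrt (ρtot x) = ρtot x := Real.mul_self_sqrt (hρnn x)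
    have key : |u x * q x * ρtot x| = (|u x| * Real.sqrt (ρtot x)) * (q x * Real.sqrt (ρtot x)) := by
      calc |u x * q x * ρtot x| = |u x| * q x * ρtot x := by
            rw [abs_mul, abs_mul, abs_of_nonneg hqnn, abs_of_nonneg (hρnn x)]
        _ = (|u x| * Real.sqrt (ρtot x)) * (q x * Real.sqrt (ρtot x)) := by
            linear_combination (-(|u x| * q x)) * hss
    rw [key]
    have h2ab := two_mul_le_add_sq (|u x| * Real.sqrt (ρtot x)) (q x * Real.sqrt (ρtot x))
    have ha : (|u x| * Real.sqrt (ρtot x)) ^ 2 = f x ^ 2 := by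
      simp only [hf]; rw [mul_pow, mul_pow, sq_abs]
    linarith [h2ab, ha, hb]
  have hintfg : Integrable (fun x => f x * g x) m := by
    refine Integrable.mono' ((hf2.add hg2int).div_const 2)
      (hfm.mul hgm).aestronglyMeasurable ?_
    filter_upwards with x
    simp only [Real.norm_eq_abs, abs_mul, Pi.div_apply, Pi.add_apply]
    nlinarith [sq_nonneg (|f x| - |g x|), sq_abs (f x), sq_abs (g x), abs_nonneg (f x), abs_nonneg (g x)]
  have hsplit : (fun x => w j * (u x * q x * ρ j x))
      = fun x => (u x * q x * ρtot x) - f x * g x := by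
    funext x
    rw [hfgen x, hD]
    ring
  have hwI : w j * ∫ x, u x * q x * ρ j x ∂m = - ∫ x, f x * g x ∂m := by
    rw [← integral_const_mul]
    rw [show (fun x => w j * (u x * q x * ρ j x)) = fun x => (u x * q x * ρtot x) - f x * g x from hsplit]
    rw [integral_sub hint_uqρ hintfg]
    rw [horth]
    ring
  -- final computation
  have habs : w j * |∫ x, u x * q x * ρ j x ∂m| ≤ Real.sqrt (w j * ((1 - w j) * S)) := by
    calc w j * |∫ x, u x * q x * ρ j x ∂m|
        = |w j * ∫ x, u x * q x * ρ j x ∂m| := by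
          rw [abs_mul, abs_of_pos (hw j)]
      _ = |∫ x, f x * g x ∂m| := by rw [hwI, abs_neg]
      _ ≤ Real.sqrt (w j * ((1 - w j) * S)) := hCS2
  have hwne : w j ≠ 0 := (hw j).ne'
  have hxnn : (0:ℝ) ≤ w j * ((1 - w j) * S) :=
    mul_nonneg (hw j).le (mul_nonneg (by linarith) hSnn)
  have hrhs : Real.sqrt ((1 - w j) * S / w j) = Real.sqrt (w j * ((1 - w j) * S)) / w j := by
    rw [show (1 - w j) * S / w j = w j * ((1 - w j) * S) / (w j * w j) from
      (mul_div_mul_left _ _ hwne).symm]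
    rw [Real.sqrt_div hxnn, Real.sqrt_mul_self (hw j).le]
  rw [hrhs, le_div_iff₀ (hw j)]
  linarith [habs]
end
end

section
/- Assume ρ_k(x) > 0 for all x ∈ ℝ^d and all k, each C_k < ∞, S < 1 and N·S < 1. Then every u ∈ C¹(ℝ^d) with ∫(|∇u|² + u²) ρ dx < ∞, ∫ u² ρ dx = 1, and ⟨u, q_j⟩_ρ = 0 for all j = 1, …, N satisfies √(Θ(1 − N S)) − √(C N S)/(1 − S) ≤ (∫_{ℝ^d} |∇u|² ρ dx)^{1/2}. (By the max–min principle this yields the paper's lower bound (√(Θ(1 − N S)) − √(C N S)/(1 − S))² ≤ λ_{N+1} on the (N+1)-st eigenvalue of Δ_ρ.) -/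
open MeasureTheory Real

noncomputable section

/-- Cauchy–Schwarz inequality for integrals of real functions. -/
lemma integral_cauchy_schwarz {α : Type*} [MeasurableSpace α] {μ : Measure α}
    {f g : α → ℝ} (hf : Integrable (fun x => f x ^ 2) μ)
    (hg : Integrable (fun x => g x ^ 2) μ)
    (hfg : Integrable (fun x => f x * g x) μ) :
    (∫ x, f x * g x ∂μ) ^ 2 ≤ (∫ x, f x ^ 2 ∂μ) * ∫ x, g x ^ 2 ∂μ := by
  have key : ∀ t : ℝ, 0 ≤ (∫ x, f x ^ 2 ∂μ) * (t * t)
      + (2 * ∫ x, f x * g x ∂μ) * t + ∫ x, g x ^ 2 ∂μ := by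
    intro t
    have h2 : 0 ≤ ∫ x, (t * f x + g x) ^ 2 ∂μ :=
      integral_nonneg fun x => sq_nonneg _
    have h3 : (fun x => (t * f x + g x) ^ 2)
        = fun x => (t ^ 2 * f x ^ 2 + (2 * t) * (f x * g x)) + g x ^ 2 := by
      funext x; ring
    rw [h3] at h2
    have hA1 : Integrable (fun x => t ^ 2 * f x ^ 2) μ := hf.const_mul _
    have hA2 : Integrable (fun x => (2 * t) * (f x * g x)) μ := hfg.const_mul _
    have hA : Integrable (fun x => t ^ 2 * f x ^ 2 + (2 * t) * (f x * g x)) μ := hA1.add hA2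
    rw [integral_add hA hg, integral_add hA1 hA2,
      integral_const_mul, integral_const_mul] at h2
    nlinarith [h2]
  have hd := discrim_le_zero key
  rw [discrim] at hd
  nlinarith [hd]

set_option maxHeartbeats 3200000 in
/-- lower bound for the `(N+1)`-st eigenvalue: every `C¹` function `u`,
normalized in `L²(ρ)` and orthogonal in `L²(ρ)` to all `q_j`, satisfies
`√(Θ(1 − N S)) − √(C N S)/(1 − S) ≤ (∫ |∇u|² ρ dx)^{1/2}`. -/
theorem statement7 {d : ℕ} {N : ℕ} (hN : 2 ≤ N)
    (w : Fin N → ℝ) (hw : ∀ k, 0 < w k) (hw1 : ∑ k, w k = 1)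
    (ρ : Fin N → EuclideanSpace ℝ (Fin d) → ℝ)
    (hρC1 : ∀ k, ContDiff ℝ 1 (ρ k)) (hρpos : ∀ k x, 0 < ρ k x)
    (hρ1 : ∀ k, ∫ x, ρ k x = 1)
    (ρtot : EuclideanSpace ℝ (Fin d) → ℝ)
    (hρtot : ρtot = fun x => ∑ k, w k * ρ k x)
    (S : ℝ)
    (hS : IsGreatest
      ((fun p : Fin N × Fin N => ∫ x, ρ p.1 x * ρ p.2 x / ρtot x) ''
        {p | p.1 ≠ p.2}) S)
    (Ccoup : ℝ)
    (hCfin : ∀ k, Integrable (fun x =>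
      ‖(ρ k x)⁻¹ • gradient (ρ k) x - (ρtot x)⁻¹ • gradient ρtot x‖ ^ 2 * ρ k x))
    (hC : IsGreatest {c : ℝ | ∃ k, c = (1 / 4) *
      ∫ x, ‖(ρ k x)⁻¹ • gradient (ρ k) x - (ρtot x)⁻¹ • gradient ρtot x‖ ^ 2 * ρ k x} Ccoup)
    (Θ : ℝ) (hΘnn : 0 ≤ Θ)
    (hΘ : IsLeast {a : ℝ | ∃ k, a = sInf (rayleighSet (ρ k))} Θ)
    (hS1 : S < 1) (hNS : (N : ℝ) * S < 1)
    (u : EuclideanSpace ℝ (Fin d) → ℝ) (hu : ContDiff ℝ 1 u)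
    (hu1 : Integrable (fun x => ‖gradient u x‖ ^ 2 * ρtot x))
    (hu2 : Integrable (fun x => u x ^ 2 * ρtot x))
    (hnorm : ∫ x, u x ^ 2 * ρtot x = 1)
    (horth : ∀ j : Fin N, ∫ x, u x * Real.sqrt (w j * ρ j x / ρtot x) * ρtot x = 0) :
    Real.sqrt (Θ * (1 - (N : ℝ) * S)) - Real.sqrt (Ccoup * N * S) / (1 - S) ≤
      Real.sqrt (∫ x, ‖gradient u x‖ ^ 2 * ρtot x) := by
  classical
  have hNpos : 0 < N := by omega
  -- positivity of ρtot
  have hρtotpos : ∀ x, 0 < ρtot x := by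
    intro x; rw [hρtot]
    exact Finset.sum_pos (fun k _ => mul_pos (hw k) (hρpos k x))
      ⟨⟨0, hNpos⟩, Finset.mem_univ _⟩
  have hwρ : ∀ k x, w k * ρ k x ≤ ρtot x := by
    intro k x; rw [hρtot]
    exact Finset.single_le_sum (fun i _ => le_of_lt (mul_pos (hw i) (hρpos i x)))
      (Finset.mem_univ k)
  -- continuity
  have hρcont : ∀ k, Continuous (ρ k) := fun k => (hρC1 k).continuous
  have hρtotcont : Continuous ρtot := by
    rw [hρtot]
    exact continuous_finset_sum _ fun k _ => continuous_const.mul (hρcont k)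
  have hucont : Continuous u := hu.continuous
  have hgradcont : Continuous (fun x => gradient u x) := by
    have hf : Continuous (fderiv ℝ u) := hu.continuous_fderiv one_ne_zero
    simp only [gradient]
    exact (InnerProductSpace.toDual ℝ _).symm.continuous.comp hf
  have hQcont : ∀ j, Continuous (fun x => Real.sqrt (w j * ρ j x / ρtot x)) :=
    fun j => Real.continuous_sqrt.comp
      ((continuous_const.mul (hρcont j)).div hρtotcont fun x => (hρtotpos x).ne')
  -- basic facts about q
  have hqnn : ∀ j x, (0:ℝ) ≤ Real.sqrt (w j * ρ j x / ρtot x) := fun j x => Real.sqrt_nonneg _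
  have hqargnn : ∀ j x, (0:ℝ) ≤ w j * ρ j x / ρtot x := fun j x =>
    div_nonneg (mul_nonneg (hw j).le (hρpos j x).le) (hρtotpos x).le
  have hqsq : ∀ j x, (Real.sqrt (w j * ρ j x / ρtot x)) ^ 2 = w j * ρ j x / ρtot x :=
    fun j x => Real.sq_sqrt (hqargnn j x)
  have hqle1 : ∀ j x, Real.sqrt (w j * ρ j x / ρtot x) ≤ 1 := by
    intro j x
    rw [show (1:ℝ) = Real.sqrt 1 by simp]
    exact Real.sqrt_le_sqrt ((div_le_one (hρtotpos x)).2 (hwρ j x))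
  -- integrability
  have hρInt : ∀ k, Integrable (ρ k) := by
    intro k
    by_contra h
    have := hρ1 k
    rw [integral_undef h] at this
    norm_num at this
  have hρtotInt : Integrable ρtot := by
    rw [hρtot]
    exact integrable_finset_sum _ fun k _ => (hρInt k).const_mul _
  have hintu2k : ∀ k, Integrable (fun x => u x ^ 2 * ρ k x) := by
    intro k
    refine (hu2.const_mul (w k)⁻¹).mono'
      (((hucont.pow 2).mul (hρcont k)).aestronglyMeasurable) ?_
    filter_upwards with x
    rw [Real.norm_eq_abs, abs_of_nonneg (mul_nonneg (sq_nonneg _) (hρpos k x).le),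
      inv_mul_eq_div, le_div_iff₀ (hw k)]
    nlinarith [hwρ k x, sq_nonneg (u x)]
  have hintg2k : ∀ k, Integrable (fun x => ‖gradient u x‖ ^ 2 * ρ k x) := by
    intro k
    refine (hu1.const_mul (w k)⁻¹).mono'
      (((hgradcont.norm.pow 2).mul (hρcont k)).aestronglyMeasurable) ?_
    filter_upwards with x
    rw [Real.norm_eq_abs, abs_of_nonneg (mul_nonneg (sq_nonneg _) (hρpos k x).le),
      inv_mul_eq_div, le_div_iff₀ (hw k)]
    nlinarith [hwρ k x, sq_nonneg ‖gradient u x‖]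
  have hintu1k : ∀ k, Integrable (fun x => u x * ρ k x) := by
    intro k
    have hbk : Integrable (fun x => 2⁻¹ * (u x ^ 2 * ρ k x + ρ k x)) :=
      ((hintu2k k).add (hρInt k)).const_mul 2⁻¹
    refine hbk.mono'
      ((hucont.mul (hρcont k)).aestronglyMeasurable) ?_
    filter_upwards with x
    rw [Real.norm_eq_abs, abs_mul, abs_of_nonneg (hρpos k x).le]
    nlinarith [sq_nonneg (|u x| - 1), sq_abs (u x), (hρpos k x).le, abs_nonneg (u x)]
  have hintuQ : ∀ j, Integrable (fun x => u x * Real.sqrt (w j * ρ j x / ρtot x) * ρtot x) := by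
    intro j
    have hbt : Integrable (fun x => 2⁻¹ * (u x ^ 2 * ρtot x + ρtot x)) :=
      (hu2.add hρtotInt).const_mul 2⁻¹
    refine hbt.mono'
      (((hucont.mul (hQcont j)).mul hρtotcont).aestronglyMeasurable) ?_
    filter_upwards with x
    rw [Real.norm_eq_abs, abs_mul, abs_mul, abs_of_nonneg (hqnn j x),
      abs_of_nonneg (hρtotpos x).le]
    nlinarith [sq_nonneg (|u x| - 1), sq_abs (u x), (hρtotpos x).le, abs_nonneg (u x),
      hqle1 j x, hqnn j x, mul_nonneg (abs_nonneg (u x)) (hρtotpos x).le]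
  have hQ2eq : ∀ j, (fun x => u x * (Real.sqrt (w j * ρ j x / ρtot x)) ^ 2 * ρtot x)
      = fun x => w j * (u x * ρ j x) := by
    intro j; funext x
    rw [hqsq j x]
    field_simp [(hρtotpos x).ne']
  have hintuQ2 : ∀ j, Integrable
      (fun x => u x * (Real.sqrt (w j * ρ j x / ρtot x)) ^ 2 * ρtot x) := by
    intro j; rw [hQ2eq j]; exact (hintu1k j).const_mul _
  -- S is nonneg
  have hSnn : 0 ≤ S := by
    obtain ⟨p, -, hpeq⟩ := hS.1
    rw [← hpeq]
    exact integral_nonneg fun x =>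
      div_nonneg (mul_nonneg (hρpos _ x).le (hρpos _ x).le) (hρtotpos x).le
  -- integrability/bound of cross terms ρ_j ρ_i / ρtot
  have hcrossInt : ∀ j i : Fin N, Integrable (fun x => ρ j x * ρ i x / ρtot x) := by
    intro j i
    refine ((hρInt j).const_mul (w i)⁻¹).mono'
      (((hρcont j).mul (hρcont i)).div hρtotcont fun x => (hρtotpos x).ne').aestronglyMeasurable ?_
    filter_upwards with x
    rw [Real.norm_eq_abs,
      abs_of_nonneg (div_nonneg (mul_nonneg (hρpos j x).le (hρpos i x).le) (hρtotpos x).le),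
      div_le_iff₀ (hρtotpos x), inv_mul_eq_div, div_mul_eq_mul_div, le_div_iff₀ (hw i)]
    nlinarith [hwρ i x, (hρpos j x).le]
  have hcrossS : ∀ j i : Fin N, j ≠ i → ∫ x, ρ j x * ρ i x / ρtot x ≤ S := by
    intro j i hji
    exact hS.2 ⟨(j, i), hji, rfl⟩
  -- the means m_k
  set m : Fin N → ℝ := fun k => ∫ x, u x * ρ k x with hm
  -- KEY 1 : ∑ w_j m_j² ≤ N S
  have hkey1 : ∀ j : Fin N, w j * (m j) ^ 2 ≤ S := by
    intro j
    set Q : EuclideanSpace ℝ (Fin d) → ℝ := fun x => Real.sqrt (w j * ρ j x / ρtot x) with hQ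
    have hQnnx : ∀ x, 0 ≤ Q x := fun x => hqnn j x
    have hQle1x : ∀ x, Q x ≤ 1 := fun x => hqle1 j x
    have hQsqx : ∀ x, Q x ^ 2 = w j * ρ j x / ρtot x := fun x => hqsq j x
    set f : EuclideanSpace ℝ (Fin d) → ℝ := fun x => u x * Real.sqrt (ρtot x) with hf
    set g : EuclideanSpace ℝ (Fin d) → ℝ :=
      fun x => Q x * (Q x - 1) * Real.sqrt (ρtot x) with hg
    have hf2 : (fun x => f x ^ 2) = fun x => u x ^ 2 * ρtot x := by
      funext x
      simp only [hf]
      rw [mul_pow, Real.sq_sqrt (hρtotpos x).le]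
    have hg2 : (fun x => g x ^ 2) = fun x => (w j * ρ j x) * (Q x - 1) ^ 2 := by
      funext x
      have h1 : g x ^ 2 = Q x ^ 2 * (Q x - 1) ^ 2 * ρtot x := by
        simp only [hg]
        rw [mul_pow, mul_pow, Real.sq_sqrt (hρtotpos x).le]
      rw [h1, hQsqx x]
      field_simp [(hρtotpos x).ne']
    have hfg : (fun x => f x * g x)
        = fun x => u x * Q x ^ 2 * ρtot x - u x * Q x * ρtot x := by
      funext x
      have hss : Real.sqrt (ρtot x) * Real.sqrt (ρtot x) = ρtot x :=
        Real.mul_self_sqrt (hρtotpos x).le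
      simp only [hf, hg]
      linear_combination (u x * Q x * (Q x - 1)) * hss
    have hf2int : Integrable (fun x => f x ^ 2) := by rw [hf2]; exact hu2
    have hg2int : Integrable (fun x => g x ^ 2) := by
      rw [hg2]
      refine ((hρInt j).const_mul (w j)).mono'
        ((continuous_const.mul (hρcont j)).mul
          (((hQcont j).sub continuous_const).pow 2)).aestronglyMeasurable ?_
      filter_upwards with x
      rw [Real.norm_eq_abs,
        abs_of_nonneg (mul_nonneg (mul_nonneg (hw j).le (hρpos j x).le) (sq_nonneg _))]
      nlinarith [mul_nonneg (mul_nonneg (mul_nonneg (hw j).le (hρpos j x).le) (hQnnx x))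
        (show (0:ℝ) ≤ 2 - Q x by linarith [hQle1x x])]
    have hfgint : Integrable (fun x => f x * g x) := by
      rw [hfg]; exact (hintuQ2 j).sub (hintuQ j)
    have hfgval : ∫ x, f x * g x = w j * m j := by
      rw [hfg, integral_sub (hintuQ2 j) (hintuQ j), horth j, sub_zero, hQ2eq j,
        integral_const_mul]
    have hCS := integral_cauchy_schwarz hf2int hg2int hfgint
    have hf2val : ∫ x, f x ^ 2 = 1 := by rw [hf2]; exact hnorm
    -- bound ∫ g² ≤ w j * S
    have hg2bound : ∫ x, g x ^ 2 ≤ w j * S := by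
      rw [hg2]
      have hpt : ∀ x, (w j * ρ j x) * (Q x - 1) ^ 2
          ≤ ∑ i ∈ Finset.univ.erase j, (w j * w i) * (ρ j x * ρ i x / ρtot x) := by
        intro x
        have hts : ∑ i, w i * ρ i x = ρtot x := by rw [hρtot]
        have hs1 : ∑ i ∈ Finset.univ.erase j, (w j * w i) * (ρ j x * ρ i x / ρtot x)
            = (w j * ρ j x / ρtot x) * ∑ i ∈ Finset.univ.erase j, w i * ρ i x := by
          rw [Finset.mul_sum]
          exact Finset.sum_congr rfl fun i _ => by ring
        rw [hs1, Finset.sum_erase_eq_sub (Finset.mem_univ j), hts]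
        have hdiv : (w j * ρ j x / ρtot x) * (ρtot x - w j * ρ j x)
            = (w j * ρ j x) * (1 - w j * ρ j x / ρtot x) := by
          field_simp [(hρtotpos x).ne']
        rw [hdiv, ← hQsqx x]
        nlinarith [hQle1x x, hQnnx x,
          mul_nonneg (mul_nonneg (mul_nonneg (hw j).le (hρpos j x).le) (hQnnx x))
            (sub_nonneg.2 (hQle1x x))]
      have hrhsInt : Integrable (fun x =>
          ∑ i ∈ Finset.univ.erase j, (w j * w i) * (ρ j x * ρ i x / ρtot x)) :=
        integrable_finset_sum _ fun i _ => (hcrossInt j i).const_mul _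
      have h1 : ∫ x, (w j * ρ j x) * (Q x - 1) ^ 2
          ≤ ∫ x, ∑ i ∈ Finset.univ.erase j, (w j * w i) * (ρ j x * ρ i x / ρtot x) := by
        refine integral_mono (by rw [← hg2]; exact hg2int) hrhsInt hpt
      have h2 : ∫ x, ∑ i ∈ Finset.univ.erase j, (w j * w i) * (ρ j x * ρ i x / ρtot x)
          = ∑ i ∈ Finset.univ.erase j, (w j * w i) * ∫ x, ρ j x * ρ i x / ρtot x := by
        rw [integral_finset_sum _ fun i _ => (hcrossInt j i).const_mul _]
        exact Finset.sum_congr rfl fun i _ => integral_const_mul _ _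
      have h3 : ∑ i ∈ Finset.univ.erase j, (w j * w i) * ∫ x, ρ j x * ρ i x / ρtot x
          ≤ ∑ i ∈ Finset.univ.erase j, (w j * w i) * S := by
        refine Finset.sum_le_sum fun i hi => ?_
        have hji : j ≠ i := fun h => (Finset.mem_erase.1 hi).1 h.symm
        exact mul_le_mul_of_nonneg_left (hcrossS j i hji)
          (mul_nonneg (hw j).le (hw i).le)
      have h4 : ∑ i ∈ Finset.univ.erase j, (w j * w i) * S ≤ w j * S := by
        have h5 : ∑ i ∈ Finset.univ.erase j, (w j * w i) * S
            = (w j * S) * ∑ i ∈ Finset.univ.erase j, w i := by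
          rw [Finset.mul_sum]
          exact Finset.sum_congr rfl fun i _ => by ring
        rw [h5, Finset.sum_erase_eq_sub (Finset.mem_univ j), hw1]
        nlinarith [hw j, hSnn, mul_nonneg (mul_nonneg (hw j).le (hw j).le) hSnn]
      linarith
    have hwm : (w j * m j) ^ 2 ≤ w j * S := by
      calc (w j * m j) ^ 2 = (∫ x, f x * g x) ^ 2 := by rw [hfgval]
        _ ≤ (∫ x, f x ^ 2) * ∫ x, g x ^ 2 := hCS
        _ = ∫ x, g x ^ 2 := by rw [hf2val, one_mul]
        _ ≤ w j * S := hg2bound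
    nlinarith [hw j, hwm, sq_nonneg (m j)]
  have hsum_m : ∑ j, w j * (m j) ^ 2 ≤ (N : ℝ) * S := by
    calc ∑ j, w j * (m j) ^ 2 ≤ ∑ _j : Fin N, S := Finset.sum_le_sum fun j _ => hkey1 j
      _ = (N : ℝ) * S := by
        rw [Finset.sum_const, Finset.card_univ, Fintype.card_fin, nsmul_eq_mul]
  -- KEY 2 : per-component Poincaré via the Rayleigh set
  have hgradsub : ∀ (c : ℝ) x, gradient (fun y => u y - c) x = gradient u x := by
    intro c x
    simp only [gradient, fderiv_sub_const]
  have hgradfun : ∀ (k : Fin N) (c : ℝ), (fun x => ‖gradient (fun y => u y - c) x‖ ^ 2 * ρ k x)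
      = fun x => ‖gradient u x‖ ^ 2 * ρ k x := by
    intro k c; funext x; rw [hgradsub c x]
  have hVint : ∀ k, Integrable (fun x => (u x - m k) ^ 2 * ρ k x) := by
    intro k
    have heq : (fun x => (u x - m k) ^ 2 * ρ k x)
        = fun x => (u x ^ 2 * ρ k x - (2 * m k) * (u x * ρ k x)) + (m k ^ 2) * ρ k x := by
      funext x; ring
    rw [heq]
    exact ((hintu2k k).sub ((hintu1k k).const_mul _)).add ((hρInt k).const_mul _)
  have hVeq : ∀ k, ∫ x, (u x - m k) ^ 2 * ρ k x = (∫ x, u x ^ 2 * ρ k x) - m k ^ 2 := by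
    intro k
    have heq : (fun x => (u x - m k) ^ 2 * ρ k x)
        = fun x => (u x ^ 2 * ρ k x - (2 * m k) * (u x * ρ k x)) + (m k ^ 2) * ρ k x := by
      funext x; ring
    have hA2 : Integrable (fun x => (2 * m k) * (u x * ρ k x)) := (hintu1k k).const_mul _
    have hA1 : Integrable (fun x => u x ^ 2 * ρ k x - (2 * m k) * (u x * ρ k x)) :=
      (hintu2k k).sub hA2
    have hA3 : Integrable (fun x => (m k ^ 2) * ρ k x) := (hρInt k).const_mul _
    have hmk : (∫ x, u x * ρ k x) = m k := rfl
    rw [heq, integral_add hA1 hA3, integral_sub (hintu2k k) hA2,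
      integral_const_mul, integral_const_mul, hρ1 k, hmk]
    ring
  have hkey2 : ∀ k, Θ * ((∫ x, u x ^ 2 * ρ k x) - m k ^ 2)
      ≤ ∫ x, ‖gradient u x‖ ^ 2 * ρ k x := by
    intro k
    have hΘk : Θ ≤ sInf (rayleighSet (ρ k)) := hΘ.2 ⟨k, rfl⟩
    have hDknn : 0 ≤ ∫ x, ‖gradient u x‖ ^ 2 * ρ k x :=
      integral_nonneg fun x => mul_nonneg (sq_nonneg _) (hρpos k x).le
    rw [← hVeq k]
    have hVnn : 0 ≤ ∫ x, (u x - m k) ^ 2 * ρ k x :=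
      integral_nonneg fun x => mul_nonneg (sq_nonneg _) (hρpos k x).le
    rcases eq_or_lt_of_le hVnn with h0 | hpos
    · rw [← h0, mul_zero]; exact hDknn
    · -- the Rayleigh quotient of u - m k is in the set
      have hmem : (∫ x, ‖gradient u x‖ ^ 2 * ρ k x) / (∫ x, (u x - m k) ^ 2 * ρ k x)
          ∈ rayleighSet (ρ k) := by
        refine ⟨fun x => u x - m k, hu.sub contDiff_const, ?_, hVint k, ?_, hpos, ?_⟩
        · rw [hgradfun k (m k)]
          exact hintg2k k
        · have heq : (fun x => (u x - m k) * ρ k x)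
              = fun x => u x * ρ k x - m k * ρ k x := by funext x; ring
          have hB : Integrable (fun x => m k * ρ k x) := (hρInt k).const_mul _
          have hmk : (∫ x, u x * ρ k x) = m k := rfl
          rw [heq, integral_sub (hintu1k k) hB, integral_const_mul, hρ1 k, hmk]
          ring
        · rw [hgradfun k (m k)]
      have hbdd : BddBelow (rayleighSet (ρ k)) := by
        refine ⟨0, ?_⟩
        rintro R ⟨f, -, -, -, -, hposf, rfl⟩
        exact div_nonneg
          (integral_nonneg fun x => mul_nonneg (sq_nonneg _) (hρpos k x).le) hposf.le
      have hle : Θ ≤ (∫ x, ‖gradient u x‖ ^ 2 * ρ k x) / (∫ x, (u x - m k) ^ 2 * ρ k x) :=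
        hΘk.trans (csInf_le hbdd hmem)
      calc Θ * ∫ x, (u x - m k) ^ 2 * ρ k x
          ≤ ((∫ x, ‖gradient u x‖ ^ 2 * ρ k x) / (∫ x, (u x - m k) ^ 2 * ρ k x))
            * ∫ x, (u x - m k) ^ 2 * ρ k x := mul_le_mul_of_nonneg_right hle hVnn
        _ = ∫ x, ‖gradient u x‖ ^ 2 * ρ k x := div_mul_cancel₀ _ hpos.ne'
  -- global sums
  have hsum1 : ∑ k, w k * ∫ x, u x ^ 2 * ρ k x = 1 := by
    have h1 : ∀ k : Fin N, w k * ∫ x, u x ^ 2 * ρ k x = ∫ x, w k * (u x ^ 2 * ρ k x) :=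
      fun k => (integral_const_mul _ _).symm
    rw [Finset.sum_congr rfl fun k _ => h1 k,
      ← integral_finset_sum _ fun k _ => (hintu2k k).const_mul _, ← hnorm]
    congr 1
    funext x
    rw [hρtot, Finset.mul_sum]
    exact Finset.sum_congr rfl fun k _ => by ring
  have hsumD : ∑ k, w k * ∫ x, ‖gradient u x‖ ^ 2 * ρ k x
      = ∫ x, ‖gradient u x‖ ^ 2 * ρtot x := by
    have h1 : ∀ k : Fin N, w k * ∫ x, ‖gradient u x‖ ^ 2 * ρ k x
        = ∫ x, w k * (‖gradient u x‖ ^ 2 * ρ k x) :=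
      fun k => (integral_const_mul _ _).symm
    rw [Finset.sum_congr rfl fun k _ => h1 k,
      ← integral_finset_sum _ fun k _ => (hintg2k k).const_mul _]
    congr 1
    funext x
    rw [hρtot, Finset.mul_sum]
    exact Finset.sum_congr rfl fun k _ => by ring
  -- chain of inequalities
  have hfinal : Θ * (1 - (N : ℝ) * S) ≤ ∫ x, ‖gradient u x‖ ^ 2 * ρtot x := by
    have hstep : ∑ k, w k * ((∫ x, u x ^ 2 * ρ k x) - m k ^ 2)
        = 1 - ∑ k, w k * (m k) ^ 2 := by
      rw [← hsum1, ← Finset.sum_sub_distrib]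
      exact Finset.sum_congr rfl fun k _ => by ring
    calc Θ * (1 - (N : ℝ) * S) ≤ Θ * (1 - ∑ k, w k * (m k) ^ 2) :=
          mul_le_mul_of_nonneg_left (by linarith) hΘnn
      _ = Θ * ∑ k, w k * ((∫ x, u x ^ 2 * ρ k x) - m k ^ 2) := by rw [hstep]
      _ = ∑ k, Θ * (w k * ((∫ x, u x ^ 2 * ρ k x) - m k ^ 2)) := Finset.mul_sum _ _ _
      _ ≤ ∑ k, w k * ∫ x, ‖gradient u x‖ ^ 2 * ρ k x := by
          refine Finset.sum_le_sum fun k _ => ?_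
          rw [mul_left_comm]
          exact mul_le_mul_of_nonneg_left (hkey2 k) (hw k).le
      _ = ∫ x, ‖gradient u x‖ ^ 2 * ρtot x := hsumD
  have hsq : Real.sqrt (Θ * (1 - (N : ℝ) * S))
      ≤ Real.sqrt (∫ x, ‖gradient u x‖ ^ 2 * ρtot x) := Real.sqrt_le_sqrt hfinal
  have hb : 0 ≤ Real.sqrt (Ccoup * N * S) / (1 - S) :=
    div_nonneg (Real.sqrt_nonneg _) (by linarith)
  linarith
end
end

section
/- Assume ρ_k(x) > 0 for all x ∈ ℝ^d and all k, each C_k < ∞, and N·√S < 1. Then every function of the form u = Σ_{k=1}^N a_k q_k with a ∈ ℝ^N and ∫ u² ρ dx = 1 satisfies ∫_{ℝ^d} |∇u|² ρ dx ≤ N C / (1 − N √S). (In particular, by the min–max principle, the N-th eigenvalue of Δ_ρ satisfies λ_N ≤ N C/(1 − N √S).) -/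
open MeasureTheory Real

noncomputable section

section GradAux

open MeasureTheory InnerProductSpace

variable {F : Type*} [NormedAddCommGroup F] [InnerProductSpace ℝ F] [CompleteSpace F]

lemma gradAux_toDual_smul (c : ℝ) (g : F) : toDual ℝ F (c • g) = c • toDual ℝ F g := by simp

lemma hasGradientAt_comp_deriv {f : F → ℝ} {g : F} {x : F} {s : ℝ → ℝ} {s' : ℝ}
    (hf : HasGradientAt f g x) (hs : HasDerivAt s s' (f x)) :
    HasGradientAt (fun y => s (f y)) (s' • g) x := by
  have h := hs.comp_hasFDerivAt x hf.hasFDerivAt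
  rw [hasGradientAt_iff_hasFDerivAt, gradAux_toDual_smul]
  exact h

lemma hasGradientAt_const_mul {f : F → ℝ} {g : F} {x : F} (c : ℝ) (hf : HasGradientAt f g x) :
    HasGradientAt (fun y => c * f y) (c • g) x := by
  rw [hasGradientAt_iff_hasFDerivAt, gradAux_toDual_smul]
  exact hf.hasFDerivAt.const_mul c

lemma hasGradientAt_sum {ι : Type*} (t : Finset ι) {f : ι → F → ℝ} {g : ι → F} (a : ι → ℝ) {x : F}
    (hf : ∀ i ∈ t, HasGradientAt (f i) (g i) x) :
    HasGradientAt (fun y => ∑ i ∈ t, a i * f i y) (∑ i ∈ t, a i • g i) x := by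
  rw [hasGradientAt_iff_hasFDerivAt, map_sum]
  exact HasFDerivAt.fun_sum fun i hi => by
    rw [gradAux_toDual_smul]
    exact ((hf i hi).hasFDerivAt).const_mul (a i)

lemma hasGradientAt_mul {f₁ f₂ : F → ℝ} {g₁ g₂ : F} {x : F}
    (h₁ : HasGradientAt f₁ g₁ x) (h₂ : HasGradientAt f₂ g₂ x) :
    HasGradientAt (fun y => f₁ y * f₂ y) (f₁ x • g₂ + f₂ x • g₁) x := by
  rw [hasGradientAt_iff_hasFDerivAt, map_add, gradAux_toDual_smul, gradAux_toDual_smul]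
  have h := h₁.hasFDerivAt.mul h₂.hasFDerivAt
  exact h

lemma hasGradientAt_inv {f : F → ℝ} {g : F} {x : F} (hf : HasGradientAt f g x) (hx : f x ≠ 0) :
    HasGradientAt (fun y => (f y)⁻¹) (-((f x)^2)⁻¹ • g) x :=
  hasGradientAt_comp_deriv hf (hasDerivAt_inv hx)

lemma hasGradientAt_sqrt_div {f g : F → ℝ} {x : F} (hf : DifferentiableAt ℝ f x)
    (hg : DifferentiableAt ℝ g x) (hfx : 0 < f x) (hgx : 0 < g x) {c : ℝ} (hc : 0 < c) :
    HasGradientAt (fun y => Real.sqrt (c * f y / g y))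
      ((Real.sqrt (c * f x / g x) / 2) •
        ((f x)⁻¹ • gradient f x - (g x)⁻¹ • gradient g x)) x := by
  have ht : 0 < c * f x / g x := by positivity
  have h1 : HasGradientAt (fun y => c * f y * (g y)⁻¹)
      ((c * f x) • (-((g x)^2)⁻¹ • gradient g x) + (g x)⁻¹ • (c • gradient f x)) x :=
    hasGradientAt_mul (hasGradientAt_const_mul c hf.hasGradientAt)
      (hasGradientAt_inv hg.hasGradientAt hgx.ne')
  have h2 := hasGradientAt_comp_deriv h1 (Real.hasDerivAt_sqrt ht.ne')
  have heq : (fun y => Real.sqrt (c * f y / g y)) = fun y => Real.sqrt (c * f y * (g y)⁻¹) := by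
    simp only [div_eq_mul_inv]
  have hs : Real.sqrt (c * f x / g x) * Real.sqrt (c * f x / g x) = c * f x / g x :=
    Real.mul_self_sqrt ht.le
  have hsne : Real.sqrt (c * f x / g x) ≠ 0 := (Real.sqrt_pos.mpr ht).ne'
  have hvec : (Real.sqrt (c * f x / g x) / 2) •
        ((f x)⁻¹ • gradient f x - (g x)⁻¹ • gradient g x)
      = (1 / (2 * Real.sqrt (c * f x / g x))) •
        ((c * f x) • (-((g x)^2)⁻¹ • gradient g x) + (g x)⁻¹ • (c • gradient f x)) := by
    have hc2 := Real.mul_self_sqrt hc.le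
    have hf2 := Real.mul_self_sqrt hfx.le
    have hg2 := Real.mul_self_sqrt hgx.le
    have hs3 : g x * Real.sqrt (c * f x / g x) ^ 2 = c * f x := by
      rw [Real.sq_sqrt ht.le]; field_simp
    match_scalars
    · field_simp
      linear_combination hs3
    · field_simp
      linear_combination -hs3
  rw [heq, hvec]
  simp only [div_eq_mul_inv] at h2 ⊢
  exact h2

lemma sqrt_mul_le_add_half {A B : ℝ} (hA : 0 ≤ A) (hB : 0 ≤ B) :
    Real.sqrt (A * B) ≤ (A + B) / 2 := by
  have h := Real.sqrt_le_sqrt (show A * B ≤ ((A + B) / 2) ^ 2 by nlinarith [sq_nonneg (A - B)])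
  rwa [Real.sqrt_sq (by linarith)] at h

end GradAux

/-- upper bound for the `N`-th eigenvalue: every normalized function of the
form `u = Σ_k a_k q_k` satisfies `∫ |∇u|² ρ dx ≤ N C / (1 − N √S)`. -/
theorem statement8 {d : ℕ} {N : ℕ} (hN : 2 ≤ N)
    (w : Fin N → ℝ) (hw : ∀ k, 0 < w k) (hw1 : ∑ k, w k = 1)
    (ρ : Fin N → EuclideanSpace ℝ (Fin d) → ℝ)
    (hρC1 : ∀ k, ContDiff ℝ 1 (ρ k)) (hρpos : ∀ k x, 0 < ρ k x)
    (hρ1 : ∀ k, ∫ x, ρ k x = 1)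
    (ρtot : EuclideanSpace ℝ (Fin d) → ℝ)
    (hρtot : ρtot = fun x => ∑ k, w k * ρ k x)
    (S : ℝ)
    (hS : IsGreatest
      ((fun p : Fin N × Fin N => ∫ x, ρ p.1 x * ρ p.2 x / ρtot x) ''
        {p | p.1 ≠ p.2}) S)
    (Ccoup : ℝ)
    (hCfin : ∀ k, Integrable (fun x =>
      ‖(ρ k x)⁻¹ • gradient (ρ k) x - (ρtot x)⁻¹ • gradient ρtot x‖ ^ 2 * ρ k x))
    (hC : IsGreatest {c : ℝ | ∃ k, c = (1 / 4) *
      ∫ x, ‖(ρ k x)⁻¹ • gradient (ρ k) x - (ρtot x)⁻¹ • gradient ρtot x‖ ^ 2 * ρ k x} Ccoup)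
    (hNS : (N : ℝ) * Real.sqrt S < 1)
    (a : Fin N → ℝ) (u : EuclideanSpace ℝ (Fin d) → ℝ)
    (hu : u = fun x => ∑ k, a k * Real.sqrt (w k * ρ k x / ρtot x))
    (hnorm : ∫ x, u x ^ 2 * ρtot x = 1) :
    ∫ x, ‖gradient u x‖ ^ 2 * ρtot x ≤
      (N : ℝ) * Ccoup / (1 - (N : ℝ) * Real.sqrt S) := by
  have hNpos : 0 < N := by omega
  haveI : NeZero N := ⟨by omega⟩
  -- basic facts
  have hρcont : ∀ k, Continuous (ρ k) := fun k => (hρC1 k).continuous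
  have hρdiff : ∀ k, Differentiable ℝ (ρ k) := fun k => (hρC1 k).differentiable one_ne_zero
  have hρtotpos : ∀ x, 0 < ρtot x := by
    intro x; rw [hρtot]
    exact Finset.sum_pos (fun k _ => mul_pos (hw k) (hρpos k x)) Finset.univ_nonempty
  have hρtotdiff : Differentiable ℝ ρtot := by
    rw [hρtot]
    exact Differentiable.fun_sum fun k _ => (differentiable_const _).mul (hρdiff k)
  have hρtotcont : Continuous ρtot := hρtotdiff.continuous
  -- the gradient of u
  have hq : ∀ (k : Fin N) x, HasGradientAt (fun y => Real.sqrt (w k * ρ k y / ρtot y))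
      ((Real.sqrt (w k * ρ k x / ρtot x) / 2) •
        ((ρ k x)⁻¹ • gradient (ρ k) x - (ρtot x)⁻¹ • gradient ρtot x)) x :=
    fun k x => hasGradientAt_sqrt_div (hρdiff k x) (hρtotdiff x) (hρpos k x) (hρtotpos x) (hw k)
  have hgradu : ∀ x, gradient u x = ∑ k, a k • ((Real.sqrt (w k * ρ k x / ρtot x) / 2) •
      ((ρ k x)⁻¹ • gradient (ρ k) x - (ρtot x)⁻¹ • gradient ρtot x)) := by
    intro x
    refine HasGradientAt.gradient ?_
    rw [hu]
    exact hasGradientAt_sum Finset.univ a (fun k _ => hq k x)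
  -- pointwise bound on the energy density
  have hptwise : ∀ x, ‖gradient u x‖ ^ 2 * ρtot x ≤ (N : ℝ) * ∑ k, a k ^ 2 *
      ((w k / 4) * (‖(ρ k x)⁻¹ • gradient (ρ k) x - (ρtot x)⁻¹ • gradient ρtot x‖ ^ 2 * ρ k x)) := by
    intro x
    have hgnn : ∀ k : Fin N, 0 ≤ w k * ρ k x / ρtot x :=
      fun k => div_nonneg (mul_nonneg (hw k).le (hρpos k x).le) (hρtotpos x).le
    have h1 : ‖gradient u x‖ ≤ ∑ k, |a k| * (Real.sqrt (w k * ρ k x / ρtot x) / 2 *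
        ‖(ρ k x)⁻¹ • gradient (ρ k) x - (ρtot x)⁻¹ • gradient ρtot x‖) := by
      rw [hgradu x]
      refine (norm_sum_le _ _).trans_eq (Finset.sum_congr rfl fun k _ => ?_)
      rw [norm_smul, norm_smul, Real.norm_eq_abs, Real.norm_eq_abs,
        abs_of_nonneg (div_nonneg (Real.sqrt_nonneg _) (by norm_num : (0:ℝ) ≤ 2))]
    have h2 := Finset.sum_mul_sq_le_sq_mul_sq Finset.univ (fun _ => (1:ℝ))
        (fun k => |a k| * (Real.sqrt (w k * ρ k x / ρtot x) / 2 *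
          ‖(ρ k x)⁻¹ • gradient (ρ k) x - (ρtot x)⁻¹ • gradient ρtot x‖))
    simp only [one_mul, one_pow, Finset.sum_const, Finset.card_univ, Fintype.card_fin,
      nsmul_eq_mul, mul_one] at h2
    calc ‖gradient u x‖ ^ 2 * ρtot x
        ≤ (∑ k, |a k| * (Real.sqrt (w k * ρ k x / ρtot x) / 2 *
          ‖(ρ k x)⁻¹ • gradient (ρ k) x - (ρtot x)⁻¹ • gradient ρtot x‖)) ^ 2 * ρtot x := by
          exact mul_le_mul_of_nonneg_right (pow_le_pow_left₀ (norm_nonneg _) h1 2) (hρtotpos x).le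
      _ ≤ ((N : ℝ) * ∑ k, (|a k| * (Real.sqrt (w k * ρ k x / ρtot x) / 2 *
          ‖(ρ k x)⁻¹ • gradient (ρ k) x - (ρtot x)⁻¹ • gradient ρtot x‖)) ^ 2) * ρtot x := by
          exact mul_le_mul_of_nonneg_right h2 (hρtotpos x).le
      _ = (N : ℝ) * ∑ k, a k ^ 2 *
          ((w k / 4) * (‖(ρ k x)⁻¹ • gradient (ρ k) x - (ρtot x)⁻¹ • gradient ρtot x‖ ^ 2 * ρ k x)) := by
          rw [mul_assoc, Finset.sum_mul]
          congr 1
          refine Finset.sum_congr rfl fun k _ => ?_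
          rw [mul_pow, mul_pow, div_pow, sq_abs, Real.sq_sqrt (hgnn k)]
          field_simp [(hρtotpos x).ne']
          ring
  -- the energy integral bound
  have hIk_nonneg : ∀ k, 0 ≤ ∫ x, ‖(ρ k x)⁻¹ • gradient (ρ k) x - (ρtot x)⁻¹ • gradient ρtot x‖ ^ 2 * ρ k x :=
    fun k => integral_nonneg fun x => mul_nonneg (by positivity) (hρpos k x).le
  have hCk : ∀ k, (1 / 4) * ∫ x, ‖(ρ k x)⁻¹ • gradient (ρ k) x - (ρtot x)⁻¹ • gradient ρtot x‖ ^ 2 * ρ k x ≤ Ccoup :=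
    fun k => hC.2 ⟨k, rfl⟩
  have hCnonneg : 0 ≤ Ccoup := le_trans (by
    have := hIk_nonneg ⟨0, hNpos⟩; linarith) (hCk ⟨0, hNpos⟩)
  have henergy : ∫ x, ‖gradient u x‖ ^ 2 * ρtot x ≤
      (N : ℝ) * Ccoup * ∑ k, a k ^ 2 * w k := by
    have hgint : Integrable (fun x => (N : ℝ) * ∑ k, a k ^ 2 * ((w k / 4) * (‖(ρ k x)⁻¹ • gradient (ρ k) x - (ρtot x)⁻¹ • gradient ρtot x‖ ^ 2 * ρ k x))) :=
      (integrable_finset_sum _ fun k _ => ((hCfin k).const_mul _).const_mul _).const_mul _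
    have h1 : ∫ x, ‖gradient u x‖ ^ 2 * ρtot x ≤
        ∫ x, (N : ℝ) * ∑ k, a k ^ 2 * ((w k / 4) * (‖(ρ k x)⁻¹ • gradient (ρ k) x - (ρtot x)⁻¹ • gradient ρtot x‖ ^ 2 * ρ k x)) :=
      integral_mono_of_nonneg (Filter.Eventually.of_forall fun x =>
        mul_nonneg (by positivity) (hρtotpos x).le) hgint (Filter.Eventually.of_forall hptwise)
    have h2 : (∫ x, (N : ℝ) * ∑ k, a k ^ 2 * ((w k / 4) * (‖(ρ k x)⁻¹ • gradient (ρ k) x - (ρtot x)⁻¹ • gradient ρtot x‖ ^ 2 * ρ k x))) =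
        (N : ℝ) * ∑ k, a k ^ 2 * ((w k / 4) * (∫ x, ‖(ρ k x)⁻¹ • gradient (ρ k) x - (ρtot x)⁻¹ • gradient ρtot x‖ ^ 2 * ρ k x)) := by
      rw [integral_const_mul _ _, integral_finset_sum _ (fun k _ => ((hCfin k).const_mul _).const_mul _)]
      congr 1
      refine Finset.sum_congr rfl fun k _ => ?_
      rw [integral_const_mul _ _, integral_const_mul _ _]
    calc ∫ x, ‖gradient u x‖ ^ 2 * ρtot x
        ≤ (N : ℝ) * ∑ k, a k ^ 2 * ((w k / 4) * (∫ x, ‖(ρ k x)⁻¹ • gradient (ρ k) x - (ρtot x)⁻¹ • gradient ρtot x‖ ^ 2 * ρ k x)) := h1.trans_eq h2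
      _ = (N : ℝ) * ∑ k, (a k ^ 2 * w k) * ((1 / 4) * (∫ x, ‖(ρ k x)⁻¹ • gradient (ρ k) x - (ρtot x)⁻¹ • gradient ρtot x‖ ^ 2 * ρ k x)) := by
          congr 1; exact Finset.sum_congr rfl fun k _ => by ring
      _ ≤ (N : ℝ) * ∑ k, (a k ^ 2 * w k) * Ccoup := by
          refine mul_le_mul_of_nonneg_left ?_ (Nat.cast_nonneg N)
          exact Finset.sum_le_sum fun k _ =>
            mul_le_mul_of_nonneg_left (hCk k) (mul_nonneg (sq_nonneg _) (hw k).le)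
      _ = (N : ℝ) * Ccoup * ∑ k, a k ^ 2 * w k := by rw [← Finset.sum_mul]; ring
  -- the normalization bound
  have hT : (∑ k, a k ^ 2 * w k) * (1 - (N : ℝ) * Real.sqrt S) ≤ 1 := by
    -- integrability of the densities
    have hρint : ∀ k, Integrable (ρ k) := by
      intro k
      by_contra h
      have := hρ1 k
      rw [integral_undef h] at this
      norm_num at this
    have hρtotint : Integrable ρtot := by
      rw [hρtot]
      exact integrable_finset_sum _ fun k _ => (hρint k).const_mul (w k)
    have hρtot1 : ∫ x, ρtot x = 1 := by
      simp only [hρtot]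
      rw [integral_finset_sum _ fun k _ => (hρint k).const_mul (w k)]
      rw [Finset.sum_congr rfl fun k _ => by rw [integral_const_mul _ _, hρ1 k, mul_one]]
      exact hw1
    -- integrability of the cross terms
    have hr_int : ∀ i j : Fin N, Integrable (fun x => Real.sqrt (w i * ρ i x) * Real.sqrt (w j * ρ j x)) := by
      intro i j
      refine Integrable.mono' (g := fun x => (w i * ρ i x + w j * ρ j x) / 2)
        ((((hρint i).const_mul _).add ((hρint j).const_mul _)).div_const 2)
        (((continuous_const.mul (hρcont i)).sqrt.mul
          (continuous_const.mul (hρcont j)).sqrt).aestronglyMeasurable)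
        (Filter.Eventually.of_forall fun x => ?_)
      rw [Real.norm_eq_abs, abs_of_nonneg (mul_nonneg (Real.sqrt_nonneg _) (Real.sqrt_nonneg _)),
        ← Real.sqrt_mul (mul_nonneg (hw i).le (hρpos i x).le)]
      exact sqrt_mul_le_add_half (mul_nonneg (hw i).le (hρpos i x).le)
        (mul_nonneg (hw j).le (hρpos j x).le)
    -- pointwise expansion of `u² ρ`
    have hpt : ∀ x, u x ^ 2 * ρtot x = ∑ i, ∑ j, (a i * a j) *
        (Real.sqrt (w i * ρ i x) * Real.sqrt (w j * ρ j x)) := by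
      intro x
      rw [hu]
      simp only [sq]
      rw [Finset.sum_mul_sum, Finset.sum_mul]
      refine Finset.sum_congr rfl fun i _ => ?_
      rw [Finset.sum_mul]
      refine Finset.sum_congr rfl fun j _ => ?_
      rw [Real.sqrt_div (mul_nonneg (hw i).le (hρpos i x).le),
        Real.sqrt_div (mul_nonneg (hw j).le (hρpos j x).le)]
      have hsq : Real.sqrt (ρtot x) * Real.sqrt (ρtot x) = ρtot x := Real.mul_self_sqrt (hρtotpos x).le
      have hsne : Real.sqrt (ρtot x) ≠ 0 := by
        intro h0
        rw [h0, mul_zero] at hsq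
        exact (hρtotpos x).ne' hsq.symm
      field_simp
      linear_combination (-(a i * a j * Real.sqrt (w i * ρ i x) * Real.sqrt (w j * ρ j x))) * hsq
    have hexp : (1 : ℝ) = ∑ i, ∑ j, (a i * a j) * (∫ x, Real.sqrt (w i * ρ i x) * Real.sqrt (w j * ρ j x)) := by
      rw [← hnorm]
      simp only [hpt]
      rw [integral_finset_sum _ fun i _ =>
        integrable_finset_sum _ fun j _ => (hr_int i j).const_mul _]
      refine Finset.sum_congr rfl fun i _ => ?_
      rw [integral_finset_sum _ fun j _ => (hr_int i j).const_mul _]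
      exact Finset.sum_congr rfl fun j _ => integral_const_mul _ _
    -- diagonal values
    have hdiag : ∀ k : Fin N, (∫ x, Real.sqrt (w k * ρ k x) * Real.sqrt (w k * ρ k x)) = w k := by
      intro k
      have hps : ∀ x, Real.sqrt (w k * ρ k x) * Real.sqrt (w k * ρ k x) = w k * ρ k x :=
        fun x => Real.mul_self_sqrt (mul_nonneg (hw k).le (hρpos k x).le)
      simp only [hps]
      rw [integral_const_mul _ _, hρ1 k, mul_one]
    have hc_nonneg : ∀ i j : Fin N, 0 ≤ ∫ x, Real.sqrt (w i * ρ i x) * Real.sqrt (w j * ρ j x) :=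
      fun i j => integral_nonneg fun x => mul_nonneg (Real.sqrt_nonneg _) (Real.sqrt_nonneg _)
    -- integrability of ρ_i ρ_j / ρtot
    have hSint : ∀ i j : Fin N, Integrable (fun x => ρ i x * ρ j x / ρtot x) := by
      intro i j
      refine Integrable.mono' ((hρint i).const_mul ((w j)⁻¹))
        ((((hρcont i).mul (hρcont j)).div hρtotcont fun x => (hρtotpos x).ne').aestronglyMeasurable)
        (Filter.Eventually.of_forall fun x => ?_)
      rw [Real.norm_eq_abs, abs_of_nonneg (div_nonneg
        (mul_nonneg (hρpos i x).le (hρpos j x).le) (hρtotpos x).le), div_le_iff₀ (hρtotpos x)]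
      have hle : w j * ρ j x ≤ ρtot x := by
        rw [hρtot]
        exact Finset.single_le_sum (fun k _ => mul_nonneg (hw k).le (hρpos k x).le)
          (Finset.mem_univ j)
      calc ρ i x * ρ j x = (w j)⁻¹ * ρ i x * (w j * ρ j x) := by
            field_simp [(hw j).ne']
        _ ≤ (w j)⁻¹ * ρ i x * ρtot x := mul_le_mul_of_nonneg_left hle
            (mul_nonneg (inv_nonneg.mpr (hw j).le) (hρpos i x).le)
    -- positivity of S
    have hSpos : 0 < S := by
      have hij : (⟨0, by omega⟩ : Fin N) ≠ ⟨1, by omega⟩ := by simp [Fin.ext_iff]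
      refine lt_of_lt_of_le ?_ (hS.2 ⟨(⟨0, by omega⟩, ⟨1, by omega⟩), hij, rfl⟩)
      rw [integral_pos_iff_support_of_nonneg_ae (Filter.Eventually.of_forall fun x =>
        div_nonneg (mul_nonneg (hρpos _ x).le (hρpos _ x).le) (hρtotpos x).le) (hSint _ _)]
      have hsupp : (Function.support fun x => ρ ⟨0, by omega⟩ x * ρ ⟨1, by omega⟩ x / ρtot x) = Set.univ :=
        Set.eq_univ_of_forall fun x => ne_of_gt (div_pos
          (mul_pos (hρpos _ x) (hρpos _ x)) (hρtotpos x))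
      rw [hsupp]
      exact isOpen_univ.measure_pos volume ⟨0, trivial⟩
    have hsqrtS : 0 < Real.sqrt S := Real.sqrt_pos.mpr hSpos
    -- off-diagonal bound
    have hoff : ∀ i j : Fin N, i ≠ j →
        (∫ x, Real.sqrt (w i * ρ i x) * Real.sqrt (w j * ρ j x)) ≤ Real.sqrt (w i) * Real.sqrt (w j) * Real.sqrt S := by
      intro i j hij
      have hpt2 : ∀ x, Real.sqrt (w i * ρ i x) * Real.sqrt (w j * ρ j x) ≤
          Real.sqrt (w i) * Real.sqrt (w j) *
            ((ρ i x * ρ j x / ρtot x / Real.sqrt S + Real.sqrt S * ρtot x) / 2) := by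
        intro x
        rw [Real.sqrt_mul (hw i).le, Real.sqrt_mul (hw j).le]
        have key : Real.sqrt (ρ i x) * Real.sqrt (ρ j x) ≤
            (ρ i x * ρ j x / ρtot x / Real.sqrt S + Real.sqrt S * ρtot x) / 2 := by
          have h1 : Real.sqrt (ρ i x) * Real.sqrt (ρ j x) =
              Real.sqrt ((ρ i x * ρ j x / ρtot x / Real.sqrt S) * (Real.sqrt S * ρtot x)) := by
            rw [← Real.sqrt_mul (hρpos i x).le]
            congr 1
            field_simp [hsqrtS.ne', (hρtotpos x).ne']
          rw [h1]
          exact sqrt_mul_le_add_half (div_nonneg (div_nonneg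
              (mul_nonneg (hρpos i x).le (hρpos j x).le) (hρtotpos x).le) hsqrtS.le)
            (mul_nonneg hsqrtS.le (hρtotpos x).le)
        calc Real.sqrt (w i) * Real.sqrt (ρ i x) * (Real.sqrt (w j) * Real.sqrt (ρ j x))
            = (Real.sqrt (w i) * Real.sqrt (w j)) * (Real.sqrt (ρ i x) * Real.sqrt (ρ j x)) := by
              ring
          _ ≤ (Real.sqrt (w i) * Real.sqrt (w j)) *
              ((ρ i x * ρ j x / ρtot x / Real.sqrt S + Real.sqrt S * ρtot x) / 2) :=
              mul_le_mul_of_nonneg_left key (mul_nonneg (Real.sqrt_nonneg _) (Real.sqrt_nonneg _))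
          _ = Real.sqrt (w i) * Real.sqrt (w j) *
              ((ρ i x * ρ j x / ρtot x / Real.sqrt S + Real.sqrt S * ρtot x) / 2) := by ring
      have hbint : Integrable (fun x => Real.sqrt (w i) * Real.sqrt (w j) *
          ((ρ i x * ρ j x / ρtot x / Real.sqrt S + Real.sqrt S * ρtot x) / 2)) :=
        ((((hSint i j).div_const _).add (hρtotint.const_mul _)).div_const 2).const_mul _
      have h2 := integral_mono_of_nonneg (Filter.Eventually.of_forall fun x =>
        mul_nonneg (Real.sqrt_nonneg _) (Real.sqrt_nonneg _)) hbint
        (Filter.Eventually.of_forall hpt2)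
      refine h2.trans ?_
      rw [integral_const_mul _ _]
      refine mul_le_mul_of_nonneg_left ?_ (mul_nonneg (Real.sqrt_nonneg _) (Real.sqrt_nonneg _))
      rw [integral_div, integral_add ((hSint i j).div_const _) (hρtotint.const_mul _),
        integral_div, integral_const_mul _ _, hρtot1, mul_one]
      have hSij : (∫ x, ρ i x * ρ j x / ρtot x) ≤ S := hS.2 ⟨(i, j), hij, rfl⟩
      have hdivS : S / Real.sqrt S = Real.sqrt S := Real.div_sqrt
      have : (∫ x, ρ i x * ρ j x / ρtot x) / Real.sqrt S ≤ Real.sqrt S := by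
        exact le_trans (div_le_div_of_nonneg_right hSij hsqrtS.le) (le_of_eq hdivS)
      linarith
    -- Cauchy-Schwarz for the coefficient vector
    have hb : ∀ k : Fin N, (|a k| * Real.sqrt (w k)) ^ 2 = a k ^ 2 * w k := fun k => by
      rw [mul_pow, sq_abs, Real.sq_sqrt (hw k).le]
    have hCS : (∑ k, |a k| * Real.sqrt (w k)) ^ 2 ≤ (N : ℝ) * ∑ k, a k ^ 2 * w k := by
      have h := Finset.sum_mul_sq_le_sq_mul_sq Finset.univ (fun _ => (1 : ℝ))
        (fun k => |a k| * Real.sqrt (w k))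
      simp only [one_mul, one_pow, Finset.sum_const, Finset.card_univ, Fintype.card_fin,
        nsmul_eq_mul, mul_one] at h
      refine h.trans_eq ?_
      congr 1
      exact Finset.sum_congr rfl fun k _ => hb k
    -- lower bound for individual terms
    have hlow : ∀ i j : Fin N, i ≠ j →
        -(Real.sqrt S * ((|a i| * Real.sqrt (w i)) * (|a j| * Real.sqrt (w j)))) ≤
          a i * a j * (∫ x, Real.sqrt (w i * ρ i x) * Real.sqrt (w j * ρ j x)) := by
      intro i j hij
      have habs : |a i * a j * (∫ x, Real.sqrt (w i * ρ i x) * Real.sqrt (w j * ρ j x))| ≤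
          Real.sqrt S * ((|a i| * Real.sqrt (w i)) * (|a j| * Real.sqrt (w j))) := by
        rw [abs_mul, abs_mul, abs_of_nonneg (hc_nonneg i j)]
        calc |a i| * |a j| * (∫ x, Real.sqrt (w i * ρ i x) * Real.sqrt (w j * ρ j x))
            ≤ |a i| * |a j| * (Real.sqrt (w i) * Real.sqrt (w j) * Real.sqrt S) :=
              mul_le_mul_of_nonneg_left (hoff i j hij) (mul_nonneg (abs_nonneg _) (abs_nonneg _))
          _ = Real.sqrt S * ((|a i| * Real.sqrt (w i)) * (|a j| * Real.sqrt (w j))) := by ring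
      linarith [neg_abs_le (a i * a j * (∫ x, Real.sqrt (w i * ρ i x) * Real.sqrt (w j * ρ j x)))]
    -- main per-row estimate
    have hmain : ∀ i : Fin N, a i ^ 2 * w i -
        Real.sqrt S * ((|a i| * Real.sqrt (w i)) * ∑ j, |a j| * Real.sqrt (w j)) ≤
        ∑ j, a i * a j * (∫ x, Real.sqrt (w i * ρ i x) * Real.sqrt (w j * ρ j x)) := by
      intro i
      conv_rhs => rw [← Finset.sum_erase_add Finset.univ _ (Finset.mem_univ i)]
      have hfi : a i * a i * (∫ x, Real.sqrt (w i * ρ i x) * Real.sqrt (w i * ρ i x)) =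
          a i ^ 2 * w i := by rw [hdiag i]; ring
      have e1 : ∑ j ∈ Finset.univ.erase i,
          -(Real.sqrt S * ((|a i| * Real.sqrt (w i)) * (|a j| * Real.sqrt (w j)))) ≤
          ∑ j ∈ Finset.univ.erase i, a i * a j * (∫ x, Real.sqrt (w i * ρ i x) * Real.sqrt (w j * ρ j x)) :=
        Finset.sum_le_sum fun j hj => hlow i j (Finset.ne_of_mem_erase hj).symm
      have e2 : ∑ j ∈ Finset.univ.erase i,
          -(Real.sqrt S * ((|a i| * Real.sqrt (w i)) * (|a j| * Real.sqrt (w j)))) =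
          -(Real.sqrt S * (|a i| * Real.sqrt (w i)) *
            ∑ j ∈ Finset.univ.erase i, |a j| * Real.sqrt (w j)) := by
        rw [Finset.mul_sum, ← Finset.sum_neg_distrib]
        exact Finset.sum_congr rfl fun j _ => by ring
      have e3 : ∑ j ∈ Finset.univ.erase i, |a j| * Real.sqrt (w j) ≤
          ∑ j, |a j| * Real.sqrt (w j) :=
        Finset.sum_le_sum_of_subset_of_nonneg (Finset.subset_univ _)
          (fun j _ _ => mul_nonneg (abs_nonneg _) (Real.sqrt_nonneg _))
      have e4 : -(Real.sqrt S * (|a i| * Real.sqrt (w i)) * ∑ j, |a j| * Real.sqrt (w j)) ≤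
          -(Real.sqrt S * (|a i| * Real.sqrt (w i)) *
            ∑ j ∈ Finset.univ.erase i, |a j| * Real.sqrt (w j)) := by
        apply neg_le_neg
        exact mul_le_mul_of_nonneg_left e3 (mul_nonneg hsqrtS.le
          (mul_nonneg (abs_nonneg _) (Real.sqrt_nonneg _)))
      rw [← e2] at e4
      have := e4.trans e1
      rw [hfi]
      linarith
    -- sum over all rows
    have hfinal : (∑ k, a k ^ 2 * w k) -
        Real.sqrt S * (∑ k, |a k| * Real.sqrt (w k)) ^ 2 ≤ 1 := by
      rw [hexp]
      have h := Finset.sum_le_sum fun i (_ : i ∈ Finset.univ) => hmain i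
      refine le_trans (le_of_eq ?_) h
      rw [Finset.sum_sub_distrib]
      congr 1
      rw [sq, Finset.sum_mul, Finset.mul_sum]
    have hCS2 : Real.sqrt S * (∑ k, |a k| * Real.sqrt (w k)) ^ 2 ≤
        Real.sqrt S * ((N : ℝ) * ∑ k, a k ^ 2 * w k) :=
      mul_le_mul_of_nonneg_left hCS hsqrtS.le
    nlinarith [hfinal, hCS2]
  -- conclusion
  have hden : 0 < 1 - (N : ℝ) * Real.sqrt S := by linarith
  have hTle : ∑ k, a k ^ 2 * w k ≤ 1 / (1 - (N : ℝ) * Real.sqrt S) :=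
    (le_div_iff₀ hden).mpr hT
  calc ∫ x, ‖gradient u x‖ ^ 2 * ρtot x ≤ (N : ℝ) * Ccoup * ∑ k, a k ^ 2 * w k := henergy
    _ ≤ (N : ℝ) * Ccoup * (1 / (1 - (N : ℝ) * Real.sqrt S)) := by
        exact mul_le_mul_of_nonneg_left hTle (mul_nonneg (Nat.cast_nonneg N) hCnonneg)
    _ = (N : ℝ) * Ccoup / (1 - (N : ℝ) * Real.sqrt S) := by ring
end
end

section
/- Let V be a real inner product space of finite dimension N ≥ 1, and let v_1, …, v_N be linearly independent unit vectors in V such that |⟨v_i, v_j⟩| ≤ δ for all i ≠ j, where δ > 0 satisfies N δ < 1. Then there exists an orthonormal basis ṽ_1, …, ṽ_N of V such that for every j = 1, …, N: ‖v_j − ṽ_j‖ ≤ √N·(1/√(1 − N δ) − 1). -/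
open Module Matrix

noncomputable section

lemma aux_sqrt {d μ : ℝ} (hd0 : 0 ≤ d) (hd1 : d < 1) (h : |μ - 1| ≤ d) :
    |Real.sqrt μ - 1| ≤ 1 / Real.sqrt (1 - d) - 1 := by
  have h1 : 1 - d ≤ μ := by have := abs_le.mp h; linarith
  have h2 : μ ≤ 1 + d := by have := abs_le.mp h; linarith
  have hs0 : 0 < Real.sqrt (1 - d) := Real.sqrt_pos.mpr (by linarith)
  have hs1 : Real.sqrt (1 - d) ≤ 1 := Real.sqrt_le_one.mpr (by linarith)
  set s := Real.sqrt (1 - d) with hs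
  rw [abs_le]
  constructor
  · have hsa : s ≤ Real.sqrt μ := Real.sqrt_le_sqrt h1
    have : 2 - s ≤ 1 / s := by rw [le_div_iff₀ hs0]; nlinarith
    linarith
  · have hsb : Real.sqrt μ ≤ Real.sqrt (1 + d) := Real.sqrt_le_sqrt h2
    have : Real.sqrt (1 + d) ≤ 1 / s := by
      rw [le_div_iff₀ hs0, hs, ← Real.sqrt_mul (by linarith)]
      exact Real.sqrt_le_one.mpr (by nlinarith)
    linarith

/-- near-orthogonal vectors: linearly independent unit vectors with
pairwise inner products at most `δ`, `N δ < 1`, are `√N (1/√(1−Nδ) − 1)`-close to an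
orthonormal basis. -/
theorem statement12 {V : Type*} [NormedAddCommGroup V] [InnerProductSpace ℝ V]
    [FiniteDimensional ℝ V]
    {N : ℕ} (hN : 1 ≤ N) (hdim : Module.finrank ℝ V = N)
    (v : Fin N → V) (hli : LinearIndependent ℝ v) (hunit : ∀ j, ‖v j‖ = 1)
    (δ : ℝ) (hδpos : 0 < δ)
    (hinner : ∀ i j, i ≠ j → |(inner ℝ (v i) (v j) : ℝ)| ≤ δ)
    (hNδ : (N : ℝ) * δ < 1) :
    ∃ b : OrthonormalBasis (Fin N) ℝ V,
      ∀ j, ‖v j - b j‖ ≤ Real.sqrt N * (1 / Real.sqrt (1 - N * δ) - 1) := by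
  classical
  set G : Matrix (Fin N) (Fin N) ℝ := Matrix.of (fun i j => (inner ℝ (v i) (v j) : ℝ)) with hGdef
  have hGsym : ∀ i j, G i j = G j i := fun i j => real_inner_comm _ _
  have hG : G.IsHermitian := by
    ext i j
    simpa [Matrix.conjTranspose_apply] using hGsym j i
  set μ : Fin N → ℝ := hG.eigenvalues with hμdef
  set U : Matrix (Fin N) (Fin N) ℝ := (hG.eigenvectorUnitary : Matrix (Fin N) (Fin N) ℝ) with hUdef
  have hU1 : U * star U = 1 := mem_unitaryGroup_iff.mp hG.eigenvectorUnitary.2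
  have hU2 : star U * U = 1 := mem_unitaryGroup_iff'.mp hG.eigenvectorUnitary.2
  have hspec : G = U * Matrix.diagonal μ * star U := by
    have h := hG.spectral_theorem
    simpa using h
  -- diagonal entries
  have hGdiag : ∀ i, G i i = 1 := by
    intro i
    have : (inner ℝ (v i) (v i) : ℝ) = 1 := by
      rw [real_inner_self_eq_norm_sq, hunit i]; norm_num
    simpa [hGdef] using this
  -- eigenvalue bound
  have hμbound : ∀ i, |μ i - 1| ≤ (N : ℝ) * δ := by
    intro i
    have hx := hG.mulVec_eigenvectorBasis i
    have hev : Module.End.HasEigenvalue (Matrix.toLin' G) (μ i) := by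
      have hvec : Module.End.HasEigenvector (Matrix.toLin' G) (μ i) ⇑(hG.eigenvectorBasis i) := by
        constructor
        · rw [Module.End.mem_eigenspace_iff, Matrix.toLin'_apply]
          exact hx
        · exact fun h => (hG.eigenvectorBasis.orthonormal.ne_zero i) (by ext l; exact congrFun h l)
      exact Module.End.hasEigenvalue_of_hasEigenvector hvec
    obtain ⟨k, hk⟩ := eigenvalue_mem_ball hev
    rw [Metric.mem_closedBall, Real.dist_eq, hGdiag k] at hk
    have hsum : (∑ j ∈ Finset.univ.erase k, ‖G k j‖) ≤ ((N : ℝ) - 1) * δ := by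
      calc (∑ j ∈ Finset.univ.erase k, ‖G k j‖)
          ≤ ∑ j ∈ Finset.univ.erase k, δ := by
            refine Finset.sum_le_sum fun j hj => ?_
            rw [Real.norm_eq_abs]
            exact hinner k j (Ne.symm (Finset.mem_erase.mp hj).1)
        _ = ((N : ℝ) - 1) * δ := by
            rw [Finset.sum_const, Finset.card_erase_of_mem (Finset.mem_univ k)]
            simp [Finset.card_univ, Nat.cast_sub hN]
    have : ((N : ℝ) - 1) * δ ≤ (N : ℝ) * δ := by nlinarith
    linarith
  have hNδ0 : 0 ≤ (N : ℝ) * δ := by positivity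
  have hμpos : ∀ i, 0 < μ i := by
    intro i
    have := abs_le.mp (hμbound i)
    linarith
    -- Löwdin orthogonalization
  set f : Fin N → ℝ := fun i => (Real.sqrt (μ i))⁻¹ with hfdef
  set H : Matrix (Fin N) (Fin N) ℝ := U * Matrix.diagonal f * star U with hHdef
  have hmul : ∀ a b : Fin N → ℝ,
      (U * Matrix.diagonal a * star U) * (U * Matrix.diagonal b * star U)
        = U * Matrix.diagonal (fun i => a i * b i) * star U := by
    intro a b
    simp only [Matrix.mul_assoc]
    rw [← Matrix.mul_assoc (star U) U, hU2, Matrix.one_mul,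
      ← Matrix.mul_assoc (Matrix.diagonal a) (Matrix.diagonal b),
      Matrix.diagonal_mul_diagonal]
  have hone : U * Matrix.diagonal (fun _ : Fin N => (1:ℝ)) * star U = 1 := by
    rw [Matrix.diagonal_one, Matrix.mul_one, hU1]
  have hsymmOf : ∀ (M : Matrix (Fin N) (Fin N) ℝ), star M = M → ∀ i j, M i j = M j i := by
    intro M hM i j
    conv_lhs => rw [← hM]
    rw [Matrix.star_apply, star_trivial]
  have hHstar : star H = H := by
    have hdstar : star (Matrix.diagonal f) = Matrix.diagonal f := by
      rw [Matrix.star_eq_conjTranspose, Matrix.diagonal_conjTranspose, star_trivial]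
    rw [hHdef, StarMul.star_mul, StarMul.star_mul, star_star, hdstar, Matrix.mul_assoc]
  have hBstar : star ((1 : Matrix (Fin N) (Fin N) ℝ) - H) = (1 : Matrix (Fin N) (Fin N) ℝ) - H := by
    rw [star_sub, hHstar, star_one]
  -- bridge between inner products and the Gram matrix
  have hbridge : ∀ (c d : Fin N → ℝ),
      (inner ℝ (∑ i, c i • v i) (∑ i, d i • v i) : ℝ) = ∑ i, ∑ l, c i * G i l * d l := by
    intro c d
    rw [sum_inner]
    refine Finset.sum_congr rfl fun i _ => ?_
    rw [real_inner_smul_left, inner_sum, Finset.mul_sum]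
    refine Finset.sum_congr rfl fun l _ => ?_
    rw [real_inner_smul_right]
    simp only [hGdef, Matrix.of_apply]
    ring
  have hquad : ∀ (B : Matrix (Fin N) (Fin N) ℝ), (∀ i j, B i j = B j i) → ∀ (j k : Fin N),
      (inner ℝ (∑ i, B i j • v i) (∑ i, B i k • v i) : ℝ) = (B * G * B) j k := by
    intro B hB j k
    rw [hbridge]
    rw [Matrix.mul_apply]
    simp only [Matrix.mul_apply, Finset.sum_mul]
    rw [Finset.sum_comm]
    refine Finset.sum_congr rfl fun i _ => Finset.sum_congr rfl fun l _ => ?_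
    rw [hB l j]
  have hHGH : H * G * H = 1 := by
    rw [hspec, hHdef, hmul, hmul]
    have heq : (fun i => (fun i => f i * μ i) i * f i) = fun _ : Fin N => (1:ℝ) := by
      funext i
      have h := hμpos i
      have hsq : Real.sqrt (μ i) * Real.sqrt (μ i) = μ i := Real.mul_self_sqrt h.le
      have hsp : Real.sqrt (μ i) ≠ 0 := by positivity
      simp only [hfdef]
      field_simp
      nlinarith [hsq]
    rw [heq, hone]
  have hBform : U * Matrix.diagonal (fun i => 1 - f i) * star U
      = (1 : Matrix (Fin N) (Fin N) ℝ) - H := by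
    have hd : Matrix.diagonal (fun i : Fin N => 1 - f i)
        = Matrix.diagonal (fun _ : Fin N => (1:ℝ)) - Matrix.diagonal f := by
      rw [← Matrix.diagonal_sub]
    rw [hd, Matrix.mul_sub, Matrix.sub_mul, hone, ← hHdef]
  have hBGB : ((1 : Matrix (Fin N) (Fin N) ℝ) - H) * G * ((1 : Matrix (Fin N) (Fin N) ℝ) - H)
      = U * Matrix.diagonal (fun i => (Real.sqrt (μ i) - 1)^2) * star U := by
    rw [← hBform, hspec, hmul, hmul]
    have heq : (fun i => (fun i => (1 - f i) * μ i) i * (1 - f i)) =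
        fun i : Fin N => (Real.sqrt (μ i) - 1)^2 := by
      funext i
      have h := hμpos i
      have hsq : Real.sqrt (μ i) * Real.sqrt (μ i) = μ i := Real.mul_self_sqrt h.le
      have hsp : Real.sqrt (μ i) ≠ 0 := by positivity
      simp only [hfdef]
      field_simp
      nlinarith [hsq]
    rw [heq]
  have hdiagentry : ∀ (a : Fin N → ℝ) (j : Fin N),
      (U * Matrix.diagonal a * star U) j j = ∑ i, a i * (U j i)^2 := by
    intro a j
    rw [Matrix.mul_apply]
    refine Finset.sum_congr rfl fun l _ => ?_
    rw [Matrix.mul_diagonal, Matrix.star_apply, star_trivial]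
    ring
  have hrow : ∀ j, ∑ i, (U j i)^2 = 1 := by
    intro j
    have h := congrFun (congrFun hU1 j) j
    rw [Matrix.mul_apply] at h
    simp only [Matrix.star_apply, star_trivial, Matrix.one_apply_eq] at h
    rw [← h]
    exact Finset.sum_congr rfl fun i _ => sq (U j i) ▸ pow_two (U j i)
  -- the orthonormal family
  set w : Fin N → V := fun j => ∑ i, H i j • v i with hwdef
  have hon : Orthonormal ℝ w := by
    rw [orthonormal_iff_ite]
    intro j k
    simp only [hwdef]
    rw [hquad H (hsymmOf H hHstar) j k, hHGH, Matrix.one_apply]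
  have hdiff : ∀ j, v j - w j = ∑ i, ((1 : Matrix (Fin N) (Fin N) ℝ) - H) i j • v i := by
    intro j
    have h1 : v j = ∑ i, (1 : Matrix (Fin N) (Fin N) ℝ) i j • v i := by
      simp [Matrix.one_apply]
    conv_lhs => rw [h1]
    simp only [hwdef]
    rw [← Finset.sum_sub_distrib]
    refine Finset.sum_congr rfl fun i _ => ?_
    rw [Matrix.sub_apply, sub_smul]
  have hnormsq : ∀ j, ‖v j - w j‖^2 = ∑ i, (Real.sqrt (μ i) - 1)^2 * (U j i)^2 := by
    intro j
    rw [← real_inner_self_eq_norm_sq, hdiff j,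
      hquad _ (hsymmOf _ hBstar) j j, hBGB, hdiagentry]
  set C := 1 / Real.sqrt (1 - (N:ℝ) * δ) - 1 with hCdef
  have hs0 : 0 < Real.sqrt (1 - (N:ℝ)*δ) := Real.sqrt_pos.mpr (by linarith)
  have hs1 : Real.sqrt (1 - (N:ℝ)*δ) ≤ 1 := Real.sqrt_le_one.mpr (by linarith)
  have hC0 : 0 ≤ C := by
    rw [hCdef, le_sub_iff_add_le, zero_add, le_div_iff₀ hs0, one_mul]
    exact hs1
  have hbound : ∀ j, ‖v j - w j‖ ≤ C := by
    intro j
    have h1 : ‖v j - w j‖^2 ≤ C^2 := by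
      rw [hnormsq j]
      calc ∑ i, (Real.sqrt (μ i) - 1)^2 * (U j i)^2
          ≤ ∑ i, C^2 * (U j i)^2 := by
            refine Finset.sum_le_sum fun i _ => ?_
            have h2 : |Real.sqrt (μ i) - 1| ≤ C := aux_sqrt hNδ0 hNδ (hμbound i)
            have h3 : (Real.sqrt (μ i) - 1)^2 ≤ C^2 := by
              rw [← sq_abs]
              exact pow_le_pow_left₀ (abs_nonneg _) h2 2
            exact mul_le_mul_of_nonneg_right h3 (sq_nonneg _)
        _ = C^2 := by rw [← Finset.mul_sum, hrow j, mul_one]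
    have h4 := Real.sqrt_le_sqrt h1
    rwa [Real.sqrt_sq (norm_nonneg _), Real.sqrt_sq hC0] at h4
  haveI : Nonempty (Fin N) := ⟨⟨0, hN⟩⟩
  have hsp : ⊤ ≤ Submodule.span ℝ (Set.range w) :=
    (hon.linearIndependent.span_eq_top_of_card_eq_finrank (by simp [hdim])).ge
  refine ⟨OrthonormalBasis.mk hon hsp, fun j => ?_⟩
  rw [OrthonormalBasis.coe_mk]
  have hsN : 1 ≤ Real.sqrt N := by
    rw [show (1:ℝ) = Real.sqrt 1 from (Real.sqrt_one).symm]
    exact Real.sqrt_le_sqrt (by exact_mod_cast hN)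
  calc ‖v j - w j‖ ≤ C := hbound j
    _ ≤ Real.sqrt N * C := le_mul_of_one_le_left hC0 hsN
end
end

section
/- Let γ ∈ ℝ and define the Gaussian densities ρ_1(x) := (1/√(2π)) e^{−x²/2} and ρ_2(x) := (1/√(2π)) e^{−(x−γ)²/2} on ℝ, and set ρ := (ρ_1 + ρ_2)/2. Define the coupling parameters C_k := (1/4) ∫_ℝ (ρ_k'(x)/ρ_k(x) − ρ'(x)/ρ(x))² ρ_k(x) dx for k = 1, 2, and the overlapping parameter S := ∫_ℝ ρ_1(x) ρ_2(x)/ρ(x) dx. Then C_1 + C_2 = (γ²/8)·S; in particular C := max(C_1, C_2) ≤ (γ²/8)·S. -/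
open MeasureTheory Real

noncomputable section

/-- mixture of two Gaussians: for the mixture `ρ = (ρ₁ + ρ₂)/2` of a
standard Gaussian and its shift by `γ`, the coupling parameters satisfy
`C₁ + C₂ = (γ²/8)·S`, and in particular `C = max(C₁, C₂) ≤ (γ²/8)·S`. -/
theorem statement14 (γ : ℝ)
    (ρ₁ ρ₂ ρ : ℝ → ℝ)
    (h₁ : ρ₁ = fun x => (Real.sqrt (2 * π))⁻¹ * Real.exp (-(x ^ 2) / 2))
    (h₂ : ρ₂ = fun x => (Real.sqrt (2 * π))⁻¹ * Real.exp (-((x - γ) ^ 2) / 2))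
    (hρ : ρ = fun x => (ρ₁ x + ρ₂ x) / 2)
    (C₁ C₂ S : ℝ)
    (hC₁ : C₁ = (1 / 4) * ∫ x : ℝ, (deriv ρ₁ x / ρ₁ x - deriv ρ x / ρ x) ^ 2 * ρ₁ x)
    (hC₂ : C₂ = (1 / 4) * ∫ x : ℝ, (deriv ρ₂ x / ρ₂ x - deriv ρ x / ρ x) ^ 2 * ρ₂ x)
    (hS : S = ∫ x : ℝ, ρ₁ x * ρ₂ x / ρ x) :
    C₁ + C₂ = γ ^ 2 / 8 * S ∧ max C₁ C₂ ≤ γ ^ 2 / 8 * S := by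
  have hπ : (0:ℝ) < Real.sqrt (2 * π) := Real.sqrt_pos.mpr (by positivity)
  have h1pos : ∀ x, 0 < ρ₁ x := by rw [h₁]; intro x; positivity
  have h2pos : ∀ x, 0 < ρ₂ x := by rw [h₂]; intro x; positivity
  have hρpos : ∀ x, 0 < ρ x := by
    rw [hρ]; intro x; have := h1pos x; have := h2pos x; positivity
  -- derivatives
  have hd1 : ∀ x, HasDerivAt ρ₁ (-x * ρ₁ x) x := by
    intro x
    rw [h₁]
    have he : HasDerivAt (fun x : ℝ => -(x ^ 2) / 2) (-x) x := by
      have := ((hasDerivAt_pow 2 x).neg).div_const 2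
      refine this.congr_deriv ?_; push_cast; ring
    have := (he.exp).const_mul (Real.sqrt (2 * π))⁻¹
    refine this.congr_deriv ?_; simp; ring
  have hd2 : ∀ x, HasDerivAt ρ₂ (-(x - γ) * ρ₂ x) x := by
    intro x
    rw [h₂]
    have hsub : HasDerivAt (fun x : ℝ => x - γ) 1 x := (hasDerivAt_id x).sub_const γ
    have he : HasDerivAt (fun x : ℝ => -((x - γ) ^ 2) / 2) (-(x - γ)) x := by
      have := ((hsub.pow 2).neg).div_const 2
      refine this.congr_deriv ?_; push_cast; ring
    have := (he.exp).const_mul (Real.sqrt (2 * π))⁻¹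
    refine this.congr_deriv ?_; simp; ring
  have hdρ : ∀ x, HasDerivAt ρ ((-x * ρ₁ x + -(x - γ) * ρ₂ x) / 2) x := by
    intro x; rw [hρ]; exact ((hd1 x).add (hd2 x)).div_const 2
  have hd1' : ∀ x, deriv ρ₁ x = -x * ρ₁ x := fun x => (hd1 x).deriv
  have hd2' : ∀ x, deriv ρ₂ x = -(x - γ) * ρ₂ x := fun x => (hd2 x).deriv
  have hdρ' : ∀ x, deriv ρ x = (-x * ρ₁ x + -(x - γ) * ρ₂ x) / 2 := fun x => (hdρ x).deriv
  have hρval : ∀ x, ρ x = (ρ₁ x + ρ₂ x) / 2 := fun x => by rw [hρ]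
  -- pointwise identities
  have hsne : ∀ x, ρ₁ x + ρ₂ x ≠ 0 := fun x => ne_of_gt (add_pos (h1pos x) (h2pos x))
  have key1 : ∀ x, (deriv ρ₁ x / ρ₁ x - deriv ρ x / ρ x) ^ 2 * ρ₁ x
      = γ ^ 2 * ρ₂ x ^ 2 / (ρ₁ x + ρ₂ x) ^ 2 * ρ₁ x := by
    intro x
    have h1 := (h1pos x).ne'
    have h2 := (h2pos x).ne'
    have hs := hsne x
    rw [hd1' x, hdρ' x, hρval x]
    have key : (-x * ρ₁ x / ρ₁ x - (-x * ρ₁ x + -(x - γ) * ρ₂ x) / 2 / ((ρ₁ x + ρ₂ x) / 2))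
        = -γ * ρ₂ x / (ρ₁ x + ρ₂ x) := by field_simp; ring
    rw [key, div_pow, mul_pow, div_mul_eq_mul_div]
    try ring
  have key2 : ∀ x, (deriv ρ₂ x / ρ₂ x - deriv ρ x / ρ x) ^ 2 * ρ₂ x
      = γ ^ 2 * ρ₁ x ^ 2 / (ρ₁ x + ρ₂ x) ^ 2 * ρ₂ x := by
    intro x
    have h1 := (h1pos x).ne'
    have h2 := (h2pos x).ne'
    have hs := hsne x
    rw [hd2' x, hdρ' x, hρval x]
    have key : (-(x - γ) * ρ₂ x / ρ₂ x - (-x * ρ₁ x + -(x - γ) * ρ₂ x) / 2 / ((ρ₁ x + ρ₂ x) / 2))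
        = γ * ρ₁ x / (ρ₁ x + ρ₂ x) := by field_simp; ring
    rw [key, div_pow, mul_pow, div_mul_eq_mul_div]
    try ring
  have keysum : ∀ x, γ ^ 2 * ρ₂ x ^ 2 / (ρ₁ x + ρ₂ x) ^ 2 * ρ₁ x
      + γ ^ 2 * ρ₁ x ^ 2 / (ρ₁ x + ρ₂ x) ^ 2 * ρ₂ x
      = γ ^ 2 / 2 * (ρ₁ x * ρ₂ x / ρ x) := by
    intro x
    have h1 := (h1pos x).ne'
    have h2 := (h2pos x).ne'
    have hs := hsne x
    rw [hρval x]
    field_simp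
    all_goals first | ring | tauto
  -- continuity and integrability
  have hc1 : Continuous ρ₁ := by rw [h₁]; fun_prop
  have hc2 : Continuous ρ₂ := by rw [h₂]; fun_prop
  have hi1 : Integrable ρ₁ := by
    rw [h₁]
    have : (fun x : ℝ => (Real.sqrt (2 * π))⁻¹ * Real.exp (-(x ^ 2) / 2))
        = fun x : ℝ => (Real.sqrt (2 * π))⁻¹ * Real.exp (-(1/2 : ℝ) * x ^ 2) := by
      funext x; ring_nf
    rw [this]
    exact (integrable_exp_neg_mul_sq (by norm_num : (0:ℝ) < 1/2)).const_mul _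
  have hi2 : Integrable ρ₂ := by
    have : ρ₂ = fun x => ρ₁ (x - γ) := by rw [h₁, h₂]
    rw [this]
    exact hi1.comp_sub_right γ
  have hg1 : Integrable (fun x => γ ^ 2 * ρ₂ x ^ 2 / (ρ₁ x + ρ₂ x) ^ 2 * ρ₁ x) := by
    refine (hi1.const_mul (γ ^ 2)).mono ?_ (Filter.Eventually.of_forall fun x => ?_)
    · exact (Continuous.div (by fun_prop) (by fun_prop)
        (fun x => pow_ne_zero 2 (hsne x))).mul hc1 |>.aestronglyMeasurable
    · have h1 := h1pos x; have h2 := h2pos x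
      rw [Real.norm_eq_abs, Real.norm_eq_abs, abs_of_nonneg (by positivity),
        abs_of_nonneg (by positivity)]
      have hle : ρ₂ x ^ 2 / (ρ₁ x + ρ₂ x) ^ 2 ≤ 1 := by
        rw [div_le_one (by positivity)]; nlinarith
      calc γ ^ 2 * ρ₂ x ^ 2 / (ρ₁ x + ρ₂ x) ^ 2 * ρ₁ x
          = γ ^ 2 * (ρ₂ x ^ 2 / (ρ₁ x + ρ₂ x) ^ 2) * ρ₁ x := by ring
        _ ≤ γ ^ 2 * 1 * ρ₁ x := by
            apply mul_le_mul_of_nonneg_right _ h1.le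
            exact mul_le_mul_of_nonneg_left hle (by positivity)
        _ = γ ^ 2 * ρ₁ x := by ring
  have hg2 : Integrable (fun x => γ ^ 2 * ρ₁ x ^ 2 / (ρ₁ x + ρ₂ x) ^ 2 * ρ₂ x) := by
    refine (hi2.const_mul (γ ^ 2)).mono ?_ (Filter.Eventually.of_forall fun x => ?_)
    · exact (Continuous.div (by fun_prop) (by fun_prop)
        (fun x => pow_ne_zero 2 (hsne x))).mul hc2 |>.aestronglyMeasurable
    · have h1 := h1pos x; have h2 := h2pos x
      rw [Real.norm_eq_abs, Real.norm_eq_abs, abs_of_nonneg (by positivity),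
        abs_of_nonneg (by positivity)]
      have hle : ρ₁ x ^ 2 / (ρ₁ x + ρ₂ x) ^ 2 ≤ 1 := by
        rw [div_le_one (by positivity)]; nlinarith
      calc γ ^ 2 * ρ₁ x ^ 2 / (ρ₁ x + ρ₂ x) ^ 2 * ρ₂ x
          = γ ^ 2 * (ρ₁ x ^ 2 / (ρ₁ x + ρ₂ x) ^ 2) * ρ₂ x := by ring
        _ ≤ γ ^ 2 * 1 * ρ₂ x := by
            apply mul_le_mul_of_nonneg_right _ h2.le
            exact mul_le_mul_of_nonneg_left hle (by positivity)
        _ = γ ^ 2 * ρ₂ x := by ring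
  -- rewrite C₁, C₂
  have hC₁' : C₁ = (1/4) * ∫ x : ℝ, γ ^ 2 * ρ₂ x ^ 2 / (ρ₁ x + ρ₂ x) ^ 2 * ρ₁ x := by
    rw [hC₁]; congr 1; exact integral_congr_ae (Filter.Eventually.of_forall key1)
  have hC₂' : C₂ = (1/4) * ∫ x : ℝ, γ ^ 2 * ρ₁ x ^ 2 / (ρ₁ x + ρ₂ x) ^ 2 * ρ₂ x := by
    rw [hC₂]; congr 1; exact integral_congr_ae (Filter.Eventually.of_forall key2)
  have hsum : C₁ + C₂ = γ ^ 2 / 8 * S := by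
    rw [hC₁', hC₂', hS, ← mul_add, ← integral_add hg1 hg2]
    have : (∫ x : ℝ, (γ ^ 2 * ρ₂ x ^ 2 / (ρ₁ x + ρ₂ x) ^ 2 * ρ₁ x
        + γ ^ 2 * ρ₁ x ^ 2 / (ρ₁ x + ρ₂ x) ^ 2 * ρ₂ x))
        = ∫ x : ℝ, γ ^ 2 / 2 * (ρ₁ x * ρ₂ x / ρ x) :=
      integral_congr_ae (Filter.Eventually.of_forall keysum)
    rw [this, integral_const_mul]
    ring
  refine ⟨hsum, ?_⟩
  have hC1nn : 0 ≤ C₁ := by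
    rw [hC₁']
    have : 0 ≤ ∫ x : ℝ, γ ^ 2 * ρ₂ x ^ 2 / (ρ₁ x + ρ₂ x) ^ 2 * ρ₁ x := by
      apply integral_nonneg; intro x
      have := h1pos x; have := h2pos x; positivity
    linarith
  have hC2nn : 0 ≤ C₂ := by
    rw [hC₂']
    have : 0 ≤ ∫ x : ℝ, γ ^ 2 * ρ₁ x ^ 2 / (ρ₁ x + ρ₂ x) ^ 2 * ρ₂ x := by
      apply integral_nonneg; intro x
      have := h1pos x; have := h2pos x; positivity
    linarith
  rw [← hsum]
  exact max_le (by linarith) (by linarith)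
end
end

section
/- Let (Ω, 𝔉, ν) be a probability space and let z : Ω → ℝ be measurable with ∫ z² dν < ∞ and ν({z ≤ 0}) = 1/2. Then ∫_ℝ min{ ν({z ≤ t}), ν({z > t}) } · 2|t| dt = ∫_Ω z² dν, where the left-hand side is a Lebesgue integral over t ∈ ℝ. -/
open MeasureTheory Real

open Set ENNReal

noncomputable section

lemma sq_layercake {Ω : Type*} [MeasurableSpace Ω] (μ : Measure Ω)
    (f : Ω → ℝ) (hf : Measurable f) :
    ∫⁻ ω, ENNReal.ofReal ((max (f ω) 0) ^ 2) ∂μ =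
      ∫⁻ t in Ioi (0:ℝ), μ {a | t < f a} * ENNReal.ofReal (2 * t) := by
  have key := lintegral_comp_eq_lintegral_meas_lt_mul μ
    (f := fun ω => max (f ω) 0) (g := fun t => 2 * t)
    (Filter.Eventually.of_forall fun ω => le_max_right _ _)
    (hf.max measurable_const).aemeasurable
    (fun t _ => (continuous_const.mul continuous_id).intervalIntegrable 0 t)
    (Filter.Eventually.mono (ae_restrict_mem measurableSet_Ioi)
      (fun t ht => by simp only [mem_Ioi] at ht; simp; linarith))
  have h1 : ∀ x : ℝ, (∫ t in (0:ℝ)..x, 2 * t) = x ^ 2 := by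
    intro x
    rw [intervalIntegral.integral_const_mul, integral_id]
    ring
  simp_rw [h1] at key
  rw [key]
  refine setLIntegral_congr_fun measurableSet_Ioi ?_
  refine fun t ht => ?_
  beta_reduce
  congr 2
  ext a
  simp only [Set.mem_setOf_eq, lt_max_iff]
  exact or_iff_left (by simp at ht; linarith)

/-- layer-cake identity from the proof of Cheeger's inequality:
if `z` is square integrable and `ν({z ≤ 0}) = 1/2`, then
`∫_ℝ min{ν({z ≤ t}), ν({z > t})}·2|t| dt = ∫ z² dν`. -/
theorem statement15 {Ω : Type*} [MeasurableSpace Ω] (ν : Measure Ω)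
    [IsProbabilityMeasure ν]
    (z : Ω → ℝ) (hz : Measurable z)
    (hz2 : Integrable (fun ω => z ω ^ 2) ν)
    (hmed : ν {ω | z ω ≤ 0} = 1 / 2) :
    ∫ t : ℝ, min (ν {ω | z ω ≤ t}).toReal (ν {ω | t < z ω}).toReal * (2 * |t|) =
      ∫ ω, z ω ^ 2 ∂ν := by
  -- notation
  set F : ℝ → ℝ := fun t =>
    min (ν {ω | z ω ≤ t}).toReal (ν {ω | t < z ω}).toReal * (2 * |t|) with hF
  -- measurability of the two tail functions
  have hPmono : Monotone fun t => (ν {ω | z ω ≤ t}).toReal := fun a b hab =>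
    ENNReal.toReal_mono (measure_ne_top ν _)
      (measure_mono fun ω h => le_trans h hab)
  have hQanti : Antitone fun t => (ν {ω | t < z ω}).toReal := fun a b hab =>
    ENNReal.toReal_mono (measure_ne_top ν _)
      (measure_mono fun ω h => lt_of_le_of_lt hab h)
  have hFmeas : Measurable F :=
    ((hPmono.measurable.min hQanti.measurable).mul
      (measurable_const.mul (by exact measurable_norm)))
  have hFnn : ∀ t, 0 ≤ F t := fun t => by
    apply mul_nonneg
    · exact le_min ENNReal.toReal_nonneg ENNReal.toReal_nonneg
    · positivity
  -- key measure facts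
  have hcompl : ∀ t : ℝ, ν {ω | t < z ω} = 1 - ν {ω | z ω ≤ t} := by
    intro t
    have : {ω | t < z ω} = {ω | z ω ≤ t}ᶜ := by ext ω; simp [not_le]
    rw [this, measure_compl (measurableSet_le hz measurable_const) (measure_ne_top ν _),
      measure_univ]
  have hhalf : (1 : ℝ≥0∞) - 1 / 2 = 1 / 2 := by
    rw [show (1:ℝ≥0∞)/2 = 2⁻¹ by rw [one_div], ENNReal.one_sub_inv_two]
  -- on nonnegative t, min is the upper-tail; on negative t it's the lower tail
  have hmin_pos : ∀ t : ℝ, 0 ≤ t →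
      F t = (ν {ω | t < z ω}).toReal * (2 * t) := by
    intro t ht
    have h1 : ν {ω | t < z ω} ≤ 1 / 2 := by
      calc ν {ω | t < z ω} ≤ ν {ω | (0:ℝ) < z ω} :=
            measure_mono fun ω h => lt_of_le_of_lt ht h
        _ = 1 - ν {ω | z ω ≤ 0} := hcompl 0
        _ = 1 / 2 := by rw [hmed, hhalf]
    have h2 : (1 : ℝ≥0∞) / 2 ≤ ν {ω | z ω ≤ t} := by
      rw [← hmed]; exact measure_mono fun ω h => le_trans h ht
    rw [hF]
    simp only
    rw [min_eq_right (ENNReal.toReal_mono (measure_ne_top ν _) (h1.trans h2)),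
      abs_of_nonneg ht]
  have hmin_neg : ∀ t : ℝ, t < 0 →
      F t = (ν {ω | z ω ≤ t}).toReal * (2 * (-t)) := by
    intro t ht
    have h1 : ν {ω | z ω ≤ t} ≤ 1 / 2 := by
      rw [← hmed]; exact measure_mono fun ω h => le_trans h ht.le
    have h2 : (1 : ℝ≥0∞) / 2 ≤ ν {ω | t < z ω} := by
      rw [hcompl t, ← hhalf]
      exact tsub_le_tsub le_rfl h1
    rw [hF]
    simp only
    rw [min_eq_left (ENNReal.toReal_mono (measure_ne_top ν _) (h1.trans h2)),
      abs_of_neg ht]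
  -- reduce to a lintegral identity
  rw [integral_eq_lintegral_of_nonneg_ae (Filter.Eventually.of_forall hFnn)
      hFmeas.aestronglyMeasurable,
    integral_eq_lintegral_of_nonneg_ae
      (Filter.Eventually.of_forall fun ω => sq_nonneg (z ω))
      (hz.pow_const 2).aestronglyMeasurable]
  congr 1
  -- split the real line
  have hsplit : ∫⁻ t, ENNReal.ofReal (F t) =
      (∫⁻ t in Iio (0:ℝ), ENNReal.ofReal (F t)) +
        ∫⁻ t in Ici (0:ℝ), ENNReal.ofReal (F t) := by
    rw [← lintegral_add_compl (μ := (volume : Measure ℝ))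
      (fun t => ENNReal.ofReal (F t)) measurableSet_Iio, compl_Iio]
  rw [hsplit]
  -- positive part
  have hpos : ∫⁻ t in Ici (0:ℝ), ENNReal.ofReal (F t) =
      ∫⁻ ω, ENNReal.ofReal ((max (z ω) 0) ^ 2) ∂ν := by
    rw [← setLIntegral_congr (Ioi_ae_eq_Ici (a := (0:ℝ))), sq_layercake ν z hz]
    refine setLIntegral_congr_fun measurableSet_Ioi
      (fun t ht => ?_)
    rw [hmin_pos t (le_of_lt ht),
      ENNReal.ofReal_mul ENNReal.toReal_nonneg,
      ENNReal.ofReal_toReal (measure_ne_top ν _)]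
  -- negative part: change of variables t ↦ -t
  have hneg : ∫⁻ t in Iio (0:ℝ), ENNReal.ofReal (F t) =
      ∫⁻ ω, ENNReal.ofReal ((max (-z ω) 0) ^ 2) ∂ν := by
    have hcov : ∫⁻ t in Iio (0:ℝ), ENNReal.ofReal (F t) =
        ∫⁻ t in Ioi (0:ℝ), ENNReal.ofReal (F (-t)) := by
      have hmp : MeasurePreserving (fun t : ℝ => -t) volume volume :=
        Measure.measurePreserving_neg volume
      have hemb : MeasurableEmbedding (fun t : ℝ => -t) :=
        (Homeomorph.neg ℝ).measurableEmbedding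
      have := hmp.setLIntegral_comp_preimage_emb hemb
        (fun t => ENNReal.ofReal (F t)) (Iio 0)
      rw [← this]
      congr 1
      ext t
      simp
    rw [hcov, sq_layercake ν (fun ω => -z ω) hz.neg]
    -- now compare the two integrands a.e. on Ioi 0
    have hae := meas_le_ae_eq_meas_lt ν (volume.restrict (Ioi (0:ℝ)))
      (fun ω => -z ω)
    refine lintegral_congr_ae ?_
    filter_upwards [hae, ae_restrict_mem measurableSet_Ioi] with t ht htpos
    simp only [mem_Ioi] at htpos
    have h1 : F (-t) = (ν {ω | z ω ≤ -t}).toReal * (2 * t) := by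
      rw [hmin_neg (-t) (by linarith)]; ring
    have h2 : {ω | z ω ≤ -t} = {a | t ≤ -z a} := by
      ext a; simp only [mem_setOf_eq, le_neg]
    rw [h1, h2, ENNReal.ofReal_mul ENNReal.toReal_nonneg,
      ENNReal.ofReal_toReal (measure_ne_top ν _), ht]
  rw [hpos, hneg, ← lintegral_add_left (f := fun ω => ENNReal.ofReal (max (-z ω) 0 ^ 2)) ((hz.neg.max measurable_const).pow_const 2).ennreal_ofReal]
  refine lintegral_congr fun ω => ?_
  rw [← ENNReal.ofReal_add (by positivity) (by positivity)]
  congr 1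
  rcases le_total (z ω) 0 with h | h
  · rw [max_eq_left (by linarith), max_eq_right h]; ring
  · rw [max_eq_right (by linarith : -z ω ≤ 0), max_eq_left h]; ring
end
end

section
/- Let ℓ, ϑ > 0 with ϑ < ℓ/2 and let 0 < ε < ℓ/2. Define the dumbbell domain M := M_0 ∪ M_1 ∪ M_2 ⊂ ℝ², where M_0 := (−ℓ/2, ℓ/2) × (−ϑ, ϑ), M_1 := (ℓ/2, ℓ) × (−ℓ/2, ℓ/2) and M_2 := (−ℓ, −ℓ/2) × (−ℓ/2, ℓ/2). Let ψ be the function ψ(t) = 1 for t ≤ 0, 1 − 2t²/ε² for t ∈ [0, ε/2], 2(t − ε)²/ε² for t ∈ [ε/2, ε], 0 for t ≥ ε; set ρ̃_1(x) := ψ(x_1), ρ̃_2(x) := ψ(−x_1) for x = (x_1, x_2) ∈ M, and ρ_k := 2 ρ̃_k/(ρ̃_1 + ρ̃_2) for k = 1, 2. Then ∫_M ρ_1(x) ρ_2(x) dx ≤ 16 ϑ ε. -/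
open MeasureTheory Real

noncomputable section

/-- dumbbell domain: for the perpendicular partition of the dumbbell
`M = M₀ ∪ M₁ ∪ M₂` with profile `ψ` and densities `ρ_k = 2ψ̃_k/(ψ̃₁ + ψ̃₂)`,
the overlap satisfies `∫_M ρ₁ ρ₂ dx ≤ 16 ϑ ε`. -/
theorem statement19 (l ϑ ε : ℝ) (hϑ : 0 < ϑ) (hϑl : ϑ < l / 2)
    (hε : 0 < ε) (hεl : ε < l / 2)
    (M : Set (ℝ × ℝ))
    (hM : M = (Set.Ioo (-(l / 2)) (l / 2) ×ˢ Set.Ioo (-ϑ) ϑ) ∪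
      (Set.Ioo (l / 2) l ×ˢ Set.Ioo (-(l / 2)) (l / 2)) ∪
      (Set.Ioo (-l) (-(l / 2)) ×ˢ Set.Ioo (-(l / 2)) (l / 2)))
    (ψ : ℝ → ℝ)
    (hψ : ψ = fun t =>
      if t ≤ 0 then 1
      else if t ≤ ε / 2 then 1 - 2 * t ^ 2 / ε ^ 2
      else if t ≤ ε then 2 * (t - ε) ^ 2 / ε ^ 2
      else 0)
    (ρ₁ ρ₂ : ℝ × ℝ → ℝ)
    (h₁ : ρ₁ = fun x => 2 * ψ x.1 / (ψ x.1 + ψ (-x.1)))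
    (h₂ : ρ₂ = fun x => 2 * ψ (-x.1) / (ψ x.1 + ψ (-x.1))) :
    ∫ x in M, ρ₁ x * ρ₂ x ≤ 16 * ϑ * ε := by
  have hl : 0 < l := by linarith
  set S : Set (ℝ × ℝ) := Set.Ioo (-ε) ε ×ˢ Set.Ioo (-ϑ) ϑ with hS
  -- ψ is nonnegative
  have hψ0 : ∀ t, 0 ≤ ψ t := by
    intro t
    rw [hψ]
    dsimp only
    split_ifs with h1 h2 h3
    · norm_num
    · push_neg at h1
      have : 2 * t ^ 2 / ε ^ 2 ≤ 1 / 2 := by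
        rw [div_le_iff₀ (by positivity)]
        nlinarith
      linarith
    · positivity
    · exact le_rfl
  -- ψ vanishes beyond ε
  have hψε : ∀ t, ε ≤ t → ψ t = 0 := by
    intro t ht
    rw [hψ]
    dsimp only
    have h1 : ¬ t ≤ 0 := by push_neg; linarith
    have h2 : ¬ t ≤ ε / 2 := by push_neg; linarith
    rw [if_neg h1, if_neg h2]
    split_ifs with h3
    · have : t = ε := le_antisymm h3 ht
      simp [this]
    · rfl
  -- the integrand
  have hprod_nonneg : ∀ x : ℝ × ℝ, 0 ≤ ρ₁ x * ρ₂ x := by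
    intro x
    rw [h₁, h₂]
    have := hψ0 x.1; have := hψ0 (-x.1)
    positivity
  have hprod_le_one : ∀ x : ℝ × ℝ, ρ₁ x * ρ₂ x ≤ 1 := by
    intro x
    rw [h₁, h₂]
    dsimp only
    set a := ψ x.1
    set b := ψ (-x.1)
    have ha := hψ0 x.1
    have hb := hψ0 (-x.1)
    rcases eq_or_lt_of_le (by positivity : (0:ℝ) ≤ a + b) with h | h
    · rw [← h]; simp
    · rw [div_mul_div_comm, div_le_one (by positivity)]
      nlinarith [sq_nonneg (a - b)]
  -- the integrand vanishes on M \ S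
  have hvanish : ∀ x ∈ M, x ∉ S → ρ₁ x * ρ₂ x = 0 := by
    intro x hxM hxS
    rcases le_or_gt ε x.1 with hcase | hcase
    · rw [h₁]
      dsimp only
      rw [hψε x.1 hcase]
      simp
    rcases le_or_gt ε (-x.1) with hcase2 | hcase2
    · rw [h₂]
      dsimp only
      rw [hψε (-x.1) hcase2]
      simp
    -- now |x.1| < ε < l/2, so x ∈ M₀, hence x ∈ S, contradiction
    exfalso
    apply hxS
    rw [hM] at hxM
    rcases hxM with (hx | hx) | hx
    · exact ⟨⟨by linarith [hcase2], hcase⟩, hx.2⟩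
    · exact absurd hx.1.1 (by push_neg; linarith)
    · exact absurd hx.1.2 (by push_neg; linarith)
  -- measurability
  have hm1 : Measurable fun t : ℝ => 1 - 2 * t ^ 2 / ε ^ 2 :=
    measurable_const.sub (((measurable_id.pow_const 2).const_mul 2).div_const _)
  have hm2 : Measurable fun t : ℝ => 2 * (t - ε) ^ 2 / ε ^ 2 :=
    ((((measurable_id.sub_const ε).pow_const 2).const_mul 2).div_const _)
  have hmψ : Measurable ψ := by
    rw [hψ]
    apply Measurable.ite (measurableSet_le measurable_id measurable_const)
      measurable_const
    apply Measurable.ite (measurableSet_le measurable_id measurable_const) hm1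
    exact Measurable.ite (measurableSet_le measurable_id measurable_const) hm2
      measurable_const
  have hma : Measurable fun x : ℝ × ℝ => ψ x.1 := hmψ.comp measurable_fst
  have hmb : Measurable fun x : ℝ × ℝ => ψ (-x.1) := hmψ.comp measurable_fst.neg
  have hmf : Measurable fun x : ℝ × ℝ => ρ₁ x * ρ₂ x := by
    rw [h₁, h₂]
    exact ((hma.const_mul 2).div (hma.add hmb)).mul
      ((hmb.const_mul 2).div (hma.add hmb))
  have hMmeas : MeasurableSet M := by
    rw [hM]
    exact ((measurableSet_Ioo.prod measurableSet_Ioo).union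
      (measurableSet_Ioo.prod measurableSet_Ioo)).union
      (measurableSet_Ioo.prod measurableSet_Ioo)
  have hSmeas : MeasurableSet S := measurableSet_Ioo.prod measurableSet_Ioo
  -- volume of S
  have hvolS : volume S = ENNReal.ofReal (2 * ε) * ENNReal.ofReal (2 * ϑ) := by
    rw [hS, Measure.volume_eq_prod, Measure.prod_prod, Real.volume_Ioo,
      Real.volume_Ioo]
    congr 1 <;> ring_nf
  have hvolS_ne : volume S ≠ ⊤ := by
    rw [hvolS]; exact ENNReal.mul_ne_top ENNReal.ofReal_ne_top ENNReal.ofReal_ne_top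
  -- the indicator bound
  have hind : ∀ x ∈ M, ρ₁ x * ρ₂ x ≤ S.indicator (fun _ => (1:ℝ)) x := by
    intro x hx
    by_cases hxS : x ∈ S
    · rw [Set.indicator_of_mem hxS]
      exact hprod_le_one x
    · rw [Set.indicator_of_notMem hxS, hvanish x hx hxS]
  -- integrability
  have hgint : IntegrableOn (S.indicator (fun _ => (1:ℝ))) M volume := by
    apply Integrable.integrableOn
    rw [integrable_indicator_iff hSmeas]
    exact (integrableOn_const_iff (C := (1:ℝ))).mpr (Or.inr hvolS_ne.lt_top)
  have hfint : IntegrableOn (fun x => ρ₁ x * ρ₂ x) M volume := by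
    apply Integrable.mono' hgint (hmf.aestronglyMeasurable.restrict)
    filter_upwards [ae_restrict_mem hMmeas] with x hx
    rw [Real.norm_eq_abs, abs_of_nonneg (hprod_nonneg x)]
    exact hind x hx
  calc ∫ x in M, ρ₁ x * ρ₂ x
      ≤ ∫ x in M, S.indicator (fun _ => (1:ℝ)) x :=
        setIntegral_mono_on hfint hgint hMmeas hind
    _ = ∫ _x in M ∩ S, (1:ℝ) := setIntegral_indicator hSmeas
    _ = (volume (M ∩ S)).toReal := by rw [setIntegral_const, smul_eq_mul, mul_one, measureReal_def]
    _ ≤ (volume S).toReal :=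
        ENNReal.toReal_mono hvolS_ne (measure_mono Set.inter_subset_right)
    _ = 2 * ε * (2 * ϑ) := by
        rw [hvolS, ENNReal.toReal_mul, ENNReal.toReal_ofReal (by linarith),
          ENNReal.toReal_ofReal (by linarith)]
    _ ≤ 16 * ϑ * ε := by nlinarith
end
end
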